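/- arXiv:1411.2169 — 8 statements merged into one kernel-verified Lean document; each statement's English description precedes it below -/
import Mathlib

section
/- Let G be a connected undirected graph and let e, f be edges with f ≠ e and f ≠ \bar{e}. Then at least one of e, \bar{e} is connected to at least one of f, \bar{f} by an admissible path in G. -/
/-- Edge `e` is connected to edge `g` by an admissible path: there is a list of
edges beginning with `e` and ending with `g` in which consecutive edges satisfy
`τ a = σ b` and `b ≠ bar a` (the single-edge list `[e]` covers the case `e = g`). -/
def AdmConn {E V : Type*} (σ τ : E → V) (bar : E → E) (e g : E) : Prop :=
  ∃ p : List E, p.head? = some e ∧ p.getLast? = some g ∧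
    p.Chain' (fun a b => τ a = σ b ∧ b ≠ bar a)

/-- Let `G` be a connected undirected graph and let `e, f` be edges
with `f ≠ e` and `f ≠ bar e`.  Then at least one of `e, bar e` is connected to at
least one of `f, bar f` by an admissible path in `G`. -/
theorem admissible_connection_up_to_conjugates
    {E V : Type*} (σ τ : E → V) (bar : E → E)
    (hinv : ∀ e, bar (bar e) = e) (hne : ∀ e, bar e ≠ e)
    (hbar : ∀ e, τ (bar e) = σ e)
    (hconn : ∀ u v : V, Relation.ReflTransGen (fun a b => ∃ e, σ e = a ∧ τ e = b) u v)
    (e f : E) (hfe : f ≠ e) (hfbe : f ≠ bar e) :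
    AdmConn σ τ bar e f ∨ AdmConn σ τ bar e (bar f) ∨
    AdmConn σ τ bar (bar e) f ∨ AdmConn σ τ bar (bar e) (bar f) := by
  classical
  set R : E → E → Prop := fun a b => τ a = σ b ∧ b ≠ bar a with hR
  have key : ∀ v, Relation.ReflTransGen (fun a b => ∃ g, σ g = a ∧ τ g = b) (τ e) v →
      ∃ p : List E, (p.head? = some e ∨ p.head? = some (bar e)) ∧
        p.Chain' R ∧ ∃ h, p.getLast? = some h ∧ τ h = v := by
    intro v hv
    induction hv with
    | refl => exact ⟨[e], Or.inl rfl, List.isChain_singleton e, e, rfl, rfl⟩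
    | tail hab hbc ih =>
      obtain ⟨g, hσg, hτg⟩ := hbc
      obtain ⟨p, hhead, hchain, h, hlast, hτh⟩ := ih
      by_cases hg : g = bar h
      · -- backtracking step: drop the last edge of `p`
        obtain ⟨q, rfl⟩ : ∃ q, p = q ++ [h] := by
          rcases List.getLast?_eq_some_iff.mp hlast with ⟨q, hq⟩
          exact ⟨q, hq⟩
        rcases q with _ | ⟨a, t⟩
        · -- p = [h], so h = e or h = bar e; use the singleton [bar h]
          simp only [List.nil_append, List.head?_cons] at hhead
          refine ⟨[bar h], ?_, List.isChain_singleton _, bar h, rfl, by rw [← hg]; exact hτg⟩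
          rcases hhead with hhead | hhead
          · right; simp [Option.some_inj.mp hhead]
          · left; simp [Option.some_inj.mp hhead, hinv]
        · -- p = (a :: t) ++ [h]; use q = a :: t
          unfold List.Chain' at hchain; rw [List.isChain_append] at hchain
          obtain ⟨hc1, hc2, hc3⟩ := hchain
          have hlq : (a :: t).getLast? = some ((a :: t).getLast (by simp)) :=
            List.getLast?_eq_getLast (by simp)
          have hRlast : R ((a :: t).getLast (by simp)) h := hc3 _ hlq h rfl
          refine ⟨a :: t, ?_, hc1, (a :: t).getLast (by simp), hlq, ?_⟩
          · simpa using hhead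
          · have : τ g = σ h := by rw [hg, hbar]
            rw [hRlast.1, ← this, hτg]
      · -- admissible step: extend with `g`
        refine ⟨p ++ [g], ?_, ?_, g, List.getLast?_concat, hτg⟩
        · rcases List.getLast?_eq_some_iff.mp hlast with ⟨q, rfl⟩
          rcases q with _ | ⟨a, t⟩ <;> simpa using hhead
        · unfold List.Chain'; rw [List.isChain_append]
          refine ⟨hchain, List.isChain_singleton _, ?_⟩
          intro x hx y hy
          simp only [hlast, Option.mem_def, Option.some_inj] at hx
          simp only [List.head?_cons, Option.mem_def, Option.some_inj] at hy
          subst hx; subst hy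
          exact ⟨by rw [hτh, hσg], hg⟩
  obtain ⟨p, hhead, hchain, h, hlast, hτh⟩ := key (σ f) (hconn _ _)
  by_cases hfh : f = bar h
  · -- then h = bar f, so p itself ends at bar f
    have hhbf : h = bar f := by rw [hfh, hinv]
    rcases hhead with hhead | hhead
    · exact Or.inr (Or.inl ⟨p, hhead, by rw [← hhbf]; exact hlast, hchain⟩)
    · exact Or.inr (Or.inr (Or.inr ⟨p, hhead, by rw [← hhbf]; exact hlast, hchain⟩))
  · -- extend p with f
    have hgood : (p ++ [f]).getLast? = some f := List.getLast?_concat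
    have hch : (p ++ [f]).Chain' R := by
      unfold List.Chain'; rw [List.isChain_append]
      refine ⟨hchain, List.isChain_singleton _, ?_⟩
      intro x hx y hy
      simp only [hlast, Option.mem_def, Option.some_inj] at hx
      simp only [List.head?_cons, Option.mem_def, Option.some_inj] at hy
      subst hx; subst hy
      exact ⟨hτh, hfh⟩
    have hhd : (p ++ [f]).head? = p.head? := by
      rcases List.getLast?_eq_some_iff.mp hlast with ⟨q, rfl⟩
      rcases q with _ | ⟨a, t⟩ <;> simp
    rcases hhead with hhead | hhead
    · exact Or.inl ⟨p ++ [f], by rw [hhd]; exact hhead, hgood, hch⟩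
    · exact Or.inr (Or.inr (Or.inl ⟨p ++ [f], by rw [hhd]; exact hhead, hgood, hch⟩))
end

section
/- Let G be a connected undirected graph. Then the undirected graph U(\tilde{G}) obtained by symmetrizing the flow graph \tilde{G} has at most two connected components; if moreover G has a vertex of degree at least 3, then U(\tilde{G}) is connected. -/
section Aux

variable {E V : Type*}

private def FR (σ τ : E → V) (bar : E → E) (e f : E) : Prop :=
  (τ e = σ f ∧ f ≠ bar e) ∨ (τ f = σ e ∧ e ≠ bar f)

private lemma sig_bar {σ τ : E → V} {bar : E → E}
    (hinv : ∀ e, bar (bar e) = e) (hbar : ∀ e, τ (bar e) = σ e) (e : E) :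
    σ (bar e) = τ e := by
  have := hbar (bar e); rw [hinv] at this; exact this.symm

private lemma bar_inj {bar : E → E} (hinv : ∀ e, bar (bar e) = e) :
    Function.Injective bar := by
  intro a b h
  have := congrArg bar h; rwa [hinv, hinv] at this

private lemma FR_bar {σ τ : E → V} {bar : E → E}
    (hinv : ∀ e, bar (bar e) = e) (hbar : ∀ e, τ (bar e) = σ e)
    {e f : E} (h : FR σ τ bar e f) : FR σ τ bar (bar e) (bar f) := by
  rcases h with ⟨h1, h2⟩ | ⟨h1, h2⟩
  · right
    refine ⟨by rw [hbar, sig_bar hinv hbar, h1], ?_⟩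
    rw [hinv]; exact fun hh => h2 hh.symm
  · left
    refine ⟨by rw [hbar, sig_bar hinv hbar, h1], ?_⟩
    rw [hinv]; exact fun hh => h2 hh.symm

private lemma C_bar {σ τ : E → V} {bar : E → E}
    (hinv : ∀ e, bar (bar e) = e) (hbar : ∀ e, τ (bar e) = σ e)
    {e f : E} (h : Relation.EqvGen (FR σ τ bar) e f) :
    Relation.EqvGen (FR σ τ bar) (bar e) (bar f) := by
  induction h with
  | rel x y hxy => exact Relation.EqvGen.rel _ _ (FR_bar hinv hbar hxy)
  | refl x => exact Relation.EqvGen.refl _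
  | symm x y _ ih => exact ih.symm _ _
  | trans x y z _ _ ih1 ih2 => exact ih1.trans _ _ _ ih2

private lemma step {σ τ : E → V} {bar : E → E}
    (hinv : ∀ e, bar (bar e) = e) (hbar : ∀ e, τ (bar e) = σ e)
    {d d' : E} (ht : τ d = τ d') (hd : d ≠ d') :
    Relation.EqvGen (FR σ τ bar) d (bar d') := by
  refine Relation.EqvGen.rel _ _ (Or.inl ⟨?_, ?_⟩)
  · rw [sig_bar hinv hbar, ht]
  · exact fun h => hd (bar_inj hinv (by rw [h]))

private def Q (σ τ : E → V) (bar : E → E) (e f : E) : Prop :=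
  Relation.EqvGen (FR σ τ bar) e f ∨ Relation.EqvGen (FR σ τ bar) e (bar f)

private lemma Q_target {σ τ : E → V} {bar : E → E}
    (hinv : ∀ e, bar (bar e) = e) (hbar : ∀ e, τ (bar e) = σ e)
    {e f g : E} (ht : τ f = τ g) (h : Q σ τ bar e f) : Q σ τ bar e g := by
  by_cases hfg : f = g
  · rwa [hfg] at h
  · have h1 : Relation.EqvGen (FR σ τ bar) f (bar g) := step hinv hbar ht hfg
    have h2 : Relation.EqvGen (FR σ τ bar) g (bar f) :=
      step hinv hbar ht.symm (Ne.symm hfg)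
    rcases h with h | h
    · exact Or.inr (h.trans _ _ _ h1)
    · exact Or.inl (h.trans _ _ _ (h2.symm _ _))

private lemma Q_bar {σ τ : E → V} {bar : E → E}
    (hinv : ∀ e, bar (bar e) = e)
    {e f : E} (h : Q σ τ bar e f) : Q σ τ bar e (bar f) := by
  rcases h with h | h
  · right; rwa [hinv]
  · left; exact h

private lemma Q_total {σ τ : E → V} {bar : E → E}
    (hinv : ∀ e, bar (bar e) = e) (hbar : ∀ e, τ (bar e) = σ e)
    (hconn : ∀ u v : V, Relation.ReflTransGen (fun a b => ∃ e, σ e = a ∧ τ e = b) u v)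
    (e f : E) : Q σ τ bar e f := by
  have key : ∀ v : V, Relation.ReflTransGen (fun a b => ∃ e, σ e = a ∧ τ e = b) (τ e) v →
      ∃ d, τ d = v ∧ Q σ τ bar e d := by
    intro v h
    induction h with
    | refl => exact ⟨e, rfl, Or.inl (Relation.EqvGen.refl _)⟩
    | tail _ hstep ih =>
        obtain ⟨d, hd, hQ⟩ := ih
        obtain ⟨g, hg1, hg2⟩ := hstep
        have htg : τ d = τ (bar g) := by rw [hd, hbar, hg1]
        have hq1 : Q σ τ bar e (bar g) := Q_target hinv hbar htg hQ
        have hq2 : Q σ τ bar e g := by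
          have := Q_bar hinv hq1; rwa [hinv] at this
        exact ⟨g, hg2, hq2⟩
  obtain ⟨d, hd, hQ⟩ := key (τ f) (hconn _ _)
  exact Q_target hinv hbar hd hQ

end Aux

/-- Let `G` be a connected undirected graph.  The undirected graph
`U(G̃)` obtained by symmetrizing the flow graph `G̃` (vertex set: the edges of
`G`; adjacency: `e ~ f` iff `(e,f)` or `(f,e)` is a flow edge) has at most two
connected components — i.e. among any three vertices of `U(G̃)`, two lie in the
same component.  If moreover `G` has a vertex of degree at least 3 (degree = the
number of edges with terminus that vertex), then `U(G̃)` is connected. -/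
theorem flow_graph_symmetrization_components
    {E V : Type*} [Fintype E] [DecidableEq V] (σ τ : E → V) (bar : E → E)
    (hinv : ∀ e, bar (bar e) = e) (hne : ∀ e, bar e ≠ e)
    (hbar : ∀ e, τ (bar e) = σ e)
    (hconn : ∀ u v : V, Relation.ReflTransGen (fun a b => ∃ e, σ e = a ∧ τ e = b) u v) :
    (∀ a b c : E,
      Relation.EqvGen (fun e f => (τ e = σ f ∧ f ≠ bar e) ∨ (τ f = σ e ∧ e ≠ bar f)) a b ∨
      Relation.EqvGen (fun e f => (τ e = σ f ∧ f ≠ bar e) ∨ (τ f = σ e ∧ e ≠ bar f)) a c ∨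
      Relation.EqvGen (fun e f => (τ e = σ f ∧ f ≠ bar e) ∨ (τ f = σ e ∧ e ≠ bar f)) b c) ∧
    ((∃ v : V, 3 ≤ (Finset.univ.filter fun e => τ e = v).card) →
      ∀ a b : E,
        Relation.EqvGen (fun e f => (τ e = σ f ∧ f ≠ bar e) ∨ (τ f = σ e ∧ e ≠ bar f)) a b) := by
  constructor
  · intro a b c
    rcases Q_total hinv hbar hconn a b with hab | hab
    · exact Or.inl hab
    · rcases Q_total hinv hbar hconn a c with hac | hac
      · exact Or.inr (Or.inl hac)
      · have h1 : Relation.EqvGen (FR σ τ bar) (bar b) (bar c) :=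
          (hab.symm _ _).trans _ _ _ hac
        have h2 := C_bar hinv hbar h1
        rw [hinv, hinv] at h2
        exact Or.inr (Or.inr h2)
  · rintro ⟨v, hv⟩ a b
    classical
    set s := (Finset.univ.filter fun e => τ e = v) with hs
    obtain ⟨d1, hd1⟩ : s.Nonempty := Finset.card_pos.mp (by omega)
    obtain ⟨d2, hd2⟩ : (s.erase d1).Nonempty := by
      apply Finset.card_pos.mp
      have := Finset.card_erase_of_mem hd1
      omega
    obtain ⟨d3, hd3⟩ : ((s.erase d1).erase d2).Nonempty := by
      apply Finset.card_pos.mp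
      have e1 := Finset.card_erase_of_mem hd1
      have e2 := Finset.card_erase_of_mem hd2
      omega
    have hd3' := Finset.mem_of_mem_erase hd3
    have hd2s : d2 ∈ s := Finset.mem_of_mem_erase hd2
    have hd3s : d3 ∈ s := Finset.mem_of_mem_erase hd3'
    have n21 : d2 ≠ d1 := (Finset.mem_erase.mp hd2).1
    have n31 : d3 ≠ d1 := (Finset.mem_erase.mp hd3').1
    have n32 : d3 ≠ d2 := (Finset.mem_erase.mp hd3).1
    have t1 : τ d1 = v := (Finset.mem_filter.mp hd1).2
    have t2 : τ d2 = v := (Finset.mem_filter.mp hd2s).2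
    have t3 : τ d3 = v := (Finset.mem_filter.mp hd3s).2
    have c12 : Relation.EqvGen (FR σ τ bar) d1 (bar d2) :=
      step hinv hbar (t1.trans t2.symm) (Ne.symm n21)
    have c32 : Relation.EqvGen (FR σ τ bar) d3 (bar d2) :=
      step hinv hbar (t3.trans t2.symm) n32
    have c31 : Relation.EqvGen (FR σ τ bar) d3 (bar d1) :=
      step hinv hbar (t3.trans t1.symm) n31
    have hself : Relation.EqvGen (FR σ τ bar) d1 (bar d1) :=
      (c12.trans _ _ _ (c32.symm _ _)).trans _ _ _ c31
    have hub : ∀ x : E, Relation.EqvGen (FR σ τ bar) x d1 := by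
      intro x
      rcases Q_total hinv hbar hconn x d1 with h | h
      · exact h
      · exact h.trans _ _ _ (hself.symm _ _)
    exact (hub a).trans _ _ _ ((hub b).symm _ _)
end

section
/- Let G be a connected undirected graph in which every vertex has degree ≥ 2 and some vertex has degree ≥ 3. Then every edge of G is connected via an admissible path (possibly empty) to an admissible cycle, such that neither the path nor its conjugate shares an edge with the cycle. -/
private lemma aux_range'_chain' {E : Type*} {R : E → E → Prop} (s : ℕ → E)
    (h : ∀ k, R (s k) (s (k + 1))) : ∀ (n a : ℕ), ((List.range' a n).map s).Chain' R := by
  intro n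
  induction n with
  | zero => intro a; exact List.isChain_nil
  | succ n ih =>
    intro a
    rw [List.range'_succ, List.map_cons]
    refine List.isChain_cons.2 ⟨?_, ih (a + 1)⟩
    intro y hy
    cases n with
    | zero => simp at hy
    | succ m =>
      rw [List.range'_succ, List.map_cons] at hy
      simp only [List.head?_cons, Option.mem_def, Option.some.injEq] at hy
      rw [← hy]
      exact h a

private lemma aux_head?_map_range' {E : Type*} (s : ℕ → E) (a n : ℕ) (h : 0 < n) :
    ((List.range' a n).map s).head? = some (s a) := by
  cases n with
  | zero => omega
  | succ m => rw [List.range'_succ]; simp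

private lemma aux_getLast?_map_range' {E : Type*} (s : ℕ → E) (a n : ℕ) :
    ((List.range' a (n + 1)).map s).getLast? = some (s (a + n)) := by
  rw [List.range'_concat]
  simp

/-- Let `G` be a connected undirected graph in which every vertex
has degree ≥ 2 and some vertex has degree ≥ 3.  Then every edge `e` of `G` is
connected via an admissible path `P` (possibly empty) to an admissible cycle `C`
(a nonempty admissible path with `τ(last) = σ(head)`), in such a way that if `P`
is empty then `e` lies on `C`, if `P` is nonempty then `P` starts with `e` and
joins `C` admissibly, and neither `P` nor its conjugate shares an edge with `C`. -/
theorem edge_connected_to_admissible_cycle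
    {E V : Type*} [Fintype E] [DecidableEq V] (σ τ : E → V) (bar : E → E)
    (hinv : ∀ e, bar (bar e) = e) (hne : ∀ e, bar e ≠ e)
    (hbar : ∀ e, τ (bar e) = σ e)
    (hconn : ∀ u v : V, Relation.ReflTransGen (fun a b => ∃ e, σ e = a ∧ τ e = b) u v)
    (hdeg2 : ∀ v : V, 2 ≤ (Finset.univ.filter fun f => τ f = v).card)
    (hdeg3 : ∃ v : V, 3 ≤ (Finset.univ.filter fun f => τ f = v).card)
    (e : E) :
    ∃ P C : List E,
      C ≠ [] ∧
      C.Chain' (fun a b => τ a = σ b ∧ b ≠ bar a) ∧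
      (∀ a b, C.getLast? = some a → C.head? = some b → τ a = σ b) ∧
      ((P = [] ∧ e ∈ C) ∨
        (P.head? = some e ∧
         P.Chain' (fun a b => τ a = σ b ∧ b ≠ bar a) ∧
         (∀ a b, P.getLast? = some a → C.head? = some b → τ a = σ b ∧ b ≠ bar a))) ∧
      (∀ x ∈ P, x ∉ C ∧ bar x ∉ C) := by
  classical
  have hσbar : ∀ f, σ (bar f) = τ f := by
    intro f
    have := hbar (bar f)
    rw [hinv] at this
    exact this.symm
  -- every edge can be admissibly extended
  have hstep : ∀ g : E, ∃ f, σ f = τ g ∧ f ≠ bar g := by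
    intro g
    have h2 : 2 ≤ (Finset.univ.filter fun f => τ f = τ g).card := hdeg2 (τ g)
    set S := Finset.univ.filter fun f => τ f = τ g with hS
    set T := S.image bar with hT
    have hinjon : Set.InjOn bar S := by
      intro a _ b _ h
      have := congrArg bar h
      rwa [hinv, hinv] at this
    have hcardT : 1 < T.card := by
      rw [hT, Finset.card_image_of_injOn hinjon]; omega
    obtain ⟨a, ha, b, hb, hab⟩ := Finset.one_lt_card.1 hcardT
    have hmem : ∀ c ∈ T, σ c = τ g := by
      intro c hc
      obtain ⟨d, hd, rfl⟩ := Finset.mem_image.1 hc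
      rw [hσbar]
      exact (Finset.mem_filter.1 hd).2
    by_cases hag : a = bar g
    · exact ⟨b, hmem b hb, fun h => hab (by rw [hag, h])⟩
    · exact ⟨a, hmem a ha, hag⟩
  -- the infinite admissible walk
  set s : ℕ → E := fun n => Nat.rec e (fun _ prev => Classical.choose (hstep prev)) n with hsdef
  have hs : ∀ n, σ (s (n + 1)) = τ (s n) ∧ s (n + 1) ≠ bar (s n) := by
    intro n
    exact Classical.choose_spec (hstep (s n))
  have hs0 : s 0 = e := rfl
  -- first collision
  have hcol : ∃ j, ∃ i, i < j ∧ (s j = s i ∨ s j = bar (s i)) := by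
    obtain ⟨x, y, hxy, hfe⟩ := Finite.exists_ne_map_eq_of_infinite s
    rcases hxy.lt_or_gt with h | h
    · exact ⟨y, x, h, Or.inl hfe.symm⟩
    · exact ⟨x, y, h, Or.inl hfe⟩
  set j := Nat.find hcol with hjdef
  obtain ⟨i, hij, hcase⟩ := Nat.find_spec hcol
  have hmin : ∀ k l, k < l → l < j → ¬(s l = s k ∨ s l = bar (s k)) := by
    intro k l hkl hlj h
    exact Nat.find_min hcol hlj ⟨k, hkl, h⟩
  have hchain : ∀ k, τ (s k) = σ (s (k + 1)) ∧ s (k + 1) ≠ bar (s k) :=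
    fun k => ⟨(hs k).1.symm, (hs k).2⟩
  rcases hcase with hA | hB
  · -- Case A : s j = s i ; cycle is s i … s (j-1)
    refine ⟨(List.range' 0 i).map s, (List.range' i (j - i)).map s, ?_, ?_, ?_, ?_, ?_⟩
    · simp only [ne_eq, List.map_eq_nil_iff, List.range'_eq_nil_iff]
      omega
    · exact aux_range'_chain' s hchain _ _
    · intro a b ha hb
      obtain ⟨m, hm⟩ : ∃ m, j - i = m + 1 := ⟨j - i - 1, by omega⟩
      rw [hm, aux_getLast?_map_range'] at ha
      rw [aux_head?_map_range' s i _ (by omega)] at hb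
      have h1 := (hs (i + m)).1
      have him : i + m + 1 = j := by omega
      rw [him, hA] at h1
      simp only [Option.some.injEq] at ha hb
      rw [← ha, ← hb]
      exact h1.symm
    · by_cases hi : i = 0
      · subst hi
        refine Or.inl ⟨by simp, ?_⟩
        simp only [List.mem_map, List.mem_range'_1]
        exact ⟨0, ⟨by omega, by omega⟩, hs0⟩
      · refine Or.inr ⟨?_, aux_range'_chain' s hchain _ _, ?_⟩
        · rw [aux_head?_map_range' s 0 i (by omega), hs0]
        · intro a b ha hb
          obtain ⟨m, hm⟩ : ∃ m, i = m + 1 := ⟨i - 1, by omega⟩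
          rw [hm, aux_getLast?_map_range'] at ha
          rw [aux_head?_map_range' s i _ (by omega)] at hb
          simp only [Option.some.injEq] at ha hb
          have h1 := hchain m
          rw [Nat.zero_add] at ha
          rw [← hm] at h1
          rw [← ha, ← hb]
          exact h1
    · intro x hx
      simp only [List.mem_map, List.mem_range'_1] at hx
      obtain ⟨k, ⟨_, hk⟩, rfl⟩ := hx
      simp only [Nat.zero_add] at hk
      constructor
      · intro hC
        simp only [List.mem_map, List.mem_range'_1] at hC
        obtain ⟨l, ⟨hl1, hl2⟩, hl⟩ := hC
        exact hmin k l (by omega) (by omega) (Or.inl hl)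
      · intro hC
        simp only [List.mem_map, List.mem_range'_1] at hC
        obtain ⟨l, ⟨hl1, hl2⟩, hl⟩ := hC
        have : s l = bar (s k) := by
          have := congrArg bar hl
          rwa [hinv] at this
        exact hmin k l (by omega) (by omega) (Or.inr this)
  · -- Case B : s j = bar (s i) ; cycle is bar s(j-1) … bar s(i+1)
    have hij2 : i + 1 < j := by
      have : i + 1 ≠ j := by
        intro h
        exact (hs i).2 (by rw [h]; exact hB)
      omega
    refine ⟨(List.range' 0 (i + 1)).map s,
      ((List.range' (i + 1) (j - i - 1)).map (fun k => bar (s k))).reverse, ?_, ?_, ?_, ?_, ?_⟩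
    · simp only [ne_eq, List.reverse_eq_nil_iff, List.map_eq_nil_iff, List.range'_eq_nil_iff]
      omega
    · refine List.isChain_reverse.2 ?_
      refine aux_range'_chain' (fun k => bar (s k)) ?_ _ _
      intro k
      refine ⟨?_, ?_⟩
      · rw [hbar, hσbar]
        exact (hs k).1
      · rw [hinv]
        intro h
        exact (hs k).2 h.symm
    · intro a b ha hb
      obtain ⟨m, hm⟩ : ∃ m, j - i - 1 = m + 1 := ⟨j - i - 2, by omega⟩
      rw [List.getLast?_reverse, hm,
        aux_head?_map_range' (fun k => bar (s k)) _ _ (by omega)] at ha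
      rw [List.head?_reverse, hm, aux_getLast?_map_range'] at hb
      simp only [Option.some.injEq] at ha hb
      have hend : i + 1 + m = j - 1 := by omega
      have h1 := (hs (i + 1 + m)).1
      have : i + 1 + m + 1 = j := by omega
      rw [this, hB, hσbar] at h1
      -- h1 : τ (s i) = τ (s (i+1+m))
      rw [← ha, ← hb, hbar, hσbar]
      -- goal : σ (s (i+1)) = τ (s (i+1+m))
      rw [(hs i).1, h1]
    · refine Or.inr ⟨?_, aux_range'_chain' s hchain _ _, ?_⟩
      · rw [aux_head?_map_range' s 0 _ (by omega), hs0]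
      · intro a b ha hb
        obtain ⟨m, hm⟩ : ∃ m, j - i - 1 = m + 1 := ⟨j - i - 2, by omega⟩
        rw [aux_getLast?_map_range'] at ha
        rw [List.head?_reverse, hm, aux_getLast?_map_range'] at hb
        simp only [Option.some.injEq] at ha hb
        rw [Nat.zero_add] at ha
        have h1 := (hs (i + 1 + m)).1
        have heq : i + 1 + m + 1 = j := by omega
        rw [heq, hB, hσbar] at h1
        constructor
        · rw [← ha, ← hb, hσbar, h1]
        · rw [← ha, ← hb]
          intro h
          have h2 : s (i + 1 + m) = s i := by
            have := congrArg bar h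
            rwa [hinv, hinv] at this
          exact hmin i (i + 1 + m) (by omega) (by omega) (Or.inl h2)
    · intro x hx
      simp only [List.mem_map, List.mem_range'_1] at hx
      obtain ⟨k, ⟨_, hk⟩, rfl⟩ := hx
      simp only [Nat.zero_add] at hk
      constructor
      · intro hC
        rw [List.mem_reverse] at hC
        simp only [List.mem_map, List.mem_range'_1] at hC
        obtain ⟨l, ⟨hl1, hl2⟩, hl⟩ := hC
        have : s l = bar (s k) := by
          have := congrArg bar hl
          rwa [hinv] at this
        exact hmin k l (by omega) (by omega) (Or.inr this)
      · intro hC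
        rw [List.mem_reverse] at hC
        simp only [List.mem_map, List.mem_range'_1] at hC
        obtain ⟨l, ⟨hl1, hl2⟩, hl⟩ := hC
        have : s l = s k := by
          have := congrArg bar hl
          rwa [hinv, hinv] at this
        exact hmin k l (by omega) (by omega) (Or.inl this)
end

section
/- Let G be a connected undirected graph in which every vertex has degree ≥ 2 and some vertex has degree ≥ 3. Then every edge e of G is connected to its conjugate \bar{e} via an admissible path. -/
lemma admconn_of_rtg {E V : Type*} (σ τ : E → V) (bar : E → E) {e g : E}
    (h : Relation.ReflTransGen (fun a b => τ a = σ b ∧ b ≠ bar a) e g) :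
    ∃ p : List E, p.head? = some e ∧ p.getLast? = some g ∧
      p.Chain' (fun a b => τ a = σ b ∧ b ≠ bar a) := by
  induction h using Relation.ReflTransGen.head_induction_on with
  | refl => exact ⟨[g], rfl, rfl, List.isChain_singleton g⟩
  | head hab h ih =>
    obtain ⟨p, hp1, hp2, hp3⟩ := ih
    cases p with
    | nil => simp at hp1
    | cons x xs =>
      rename_i a c
      refine ⟨a :: x :: xs, rfl, by simpa using hp2, ?_⟩
      have hx : x = c := by simpa using hp1
      exact List.IsChain.cons_cons (hx ▸ hab) hp3

/-- Let `G` be a connected undirected graph in which every vertex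
has degree ≥ 2 and some vertex has degree ≥ 3.  Then every edge `e` of `G` is
connected to its conjugate `bar e` via an admissible path. -/
theorem edge_admissibly_connected_to_conjugate
    {E V : Type*} [Fintype E] [DecidableEq V] (σ τ : E → V) (bar : E → E)
    (hinv : ∀ e, bar (bar e) = e) (hne : ∀ e, bar e ≠ e)
    (hbar : ∀ e, τ (bar e) = σ e)
    (hconn : ∀ u v : V, Relation.ReflTransGen (fun a b => ∃ e, σ e = a ∧ τ e = b) u v)
    (hdeg2 : ∀ v : V, 2 ≤ (Finset.univ.filter fun f => τ f = v).card)
    (hdeg3 : ∃ v : V, 3 ≤ (Finset.univ.filter fun f => τ f = v).card)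
    (e : E) :
    AdmConn σ τ bar e (bar e) := by
  classical
  set R : E → E → Prop := fun a b => τ a = σ b ∧ b ≠ bar a with hRdef
  suffices h : Relation.ReflTransGen R e (bar e) by
    exact admconn_of_rtg σ τ bar h
  by_contra hbe
  have hbarinj : Function.Injective bar := fun a b h => by
    rw [← hinv a, h, hinv]
  have hsback : ∀ f, σ (bar f) = τ f := fun f => by
    have h := hbar (bar f); rw [hinv] at h; exact h.symm
  set S : Set E := {f | Relation.ReflTransGen R e f} with hSdef
  have hSsucc : ∀ {f g : E}, f ∈ S → τ f = σ g → g ≠ bar f → g ∈ S :=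
    fun hf h1 h2 => Relation.ReflTransGen.tail hf ⟨h1, h2⟩
  set T : Finset E := Finset.univ.filter (fun f => f ∈ S ∧ bar f ∉ S) with hTdef
  have hmemT : ∀ {f : E}, f ∈ T ↔ f ∈ S ∧ bar f ∉ S := by
    intro f; simp [hTdef]
  have heT : e ∈ T := hmemT.mpr ⟨Relation.ReflTransGen.refl, hbe⟩
  -- uniqueness of S-edge entering τ f for f ∈ T
  have huniq : ∀ f ∈ T, ∀ g ∈ S, τ g = τ f → g = f := by
    intro f hf g hg hfg
    by_contra hne'
    have hbfS : bar f ∈ S := by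
      refine hSsucc hg ?_ ?_
      · rw [hfg, (hsback f).symm]
      · intro hc
        exact hne' (hbarinj hc).symm
    exact ((hmemT.mp hf).2 hbfS)
  set Out : E → Finset E := fun f =>
    Finset.univ.filter (fun g => σ g = τ f ∧ g ≠ bar f) with hOutdef
  have hmemOut : ∀ {f g : E}, g ∈ Out f ↔ σ g = τ f ∧ g ≠ bar f := by
    intro f g; simp [hOutdef]
  have hOutT : ∀ f ∈ T, Out f ⊆ T := by
    intro f hf g hg
    obtain ⟨h1, h2⟩ := hmemOut.mp hg
    have hgS : g ∈ S := hSsucc (hmemT.mp hf).1 h1.symm h2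
    refine hmemT.mpr ⟨hgS, ?_⟩
    intro hbg
    have : bar g = f := huniq f hf (bar g) hbg (by rw [hbar g, h1])
    exact h2 (by rw [← this, hinv])
  -- card of Out f
  have hsigma_card : ∀ v : V,
      (Finset.univ.filter fun g => σ g = v).card
        = (Finset.univ.filter fun f => τ f = v).card := by
    intro v
    apply Finset.card_bij (fun g _ => bar g)
    · intro a ha
      simp only [Finset.mem_filter, Finset.mem_univ, true_and] at ha ⊢
      rw [hbar, ha]
    · intro a ha b hb h
      exact hbarinj h
    · intro b hb
      simp only [Finset.mem_filter, Finset.mem_univ, true_and] at hb ⊢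
      exact ⟨bar b, by rw [hsback, hb], hinv b⟩
  have hOutCard : ∀ f : E,
      (Out f).card = (Finset.univ.filter fun g => τ g = τ f).card - 1 := by
    intro f
    have : Out f = (Finset.univ.filter fun g => σ g = τ f).erase (bar f) := by
      ext g
      simp only [hmemOut, Finset.mem_erase, Finset.mem_filter, Finset.mem_univ, true_and]
      tauto
    rw [this, Finset.card_erase_of_mem, hsigma_card]
    simp [hsback]
  have hOutpos : ∀ f : E, 1 ≤ (Out f).card := by
    intro f
    have := hdeg2 (τ f)
    rw [hOutCard f]
    omega
  -- disjointness
  have hdisj : (T : Set E).PairwiseDisjoint Out := by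
    intro f1 h1 f2 h2 hne12
    refine Finset.disjoint_left.mpr ?_
    intro g hg1 hg2
    obtain ⟨ha1, _⟩ := hmemOut.mp hg1
    obtain ⟨ha2, _⟩ := hmemOut.mp hg2
    exact hne12 (huniq f1 h1 f2 (hmemT.mp h2).1 (by rw [← ha1, ha2])).symm
  have hbU : T.biUnion Out ⊆ T := by
    intro g hg
    obtain ⟨f, hf, hgf⟩ := Finset.mem_biUnion.mp hg
    exact hOutT f hf hgf
  have hsum_eq : ∑ f ∈ T, (Out f).card = (T.biUnion Out).card :=
    (Finset.card_biUnion hdisj).symm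
  have hle : ∑ f ∈ T, (Out f).card ≤ T.card :=
    hsum_eq ▸ Finset.card_le_card hbU
  have hge : T.card ≤ ∑ f ∈ T, (Out f).card := by
    calc T.card = ∑ _f ∈ T, 1 := by simp
    _ ≤ ∑ f ∈ T, (Out f).card := Finset.sum_le_sum fun f _ => hOutpos f
  have hone : ∀ f ∈ T, (Out f).card = 1 := by
    intro f hf
    by_contra hne1
    have h2le : 2 ≤ (Out f).card := by
      have := hOutpos f; omega
    have hlt : T.card < ∑ f ∈ T, (Out f).card := by
      calc T.card = ∑ _f ∈ T, 1 := by simp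
      _ < ∑ f ∈ T, (Out f).card :=
        Finset.sum_lt_sum (fun i _ => hOutpos i) ⟨f, hf, by omega⟩
    omega
  have hbUeq : T.biUnion Out = T := by
    apply Finset.eq_of_subset_of_card_le hbU
    rw [← hsum_eq]
    exact hge
  have hsrc : ∀ g ∈ T, ∃ f ∈ T, τ f = σ g := by
    intro g hg
    rw [← hbUeq] at hg
    obtain ⟨f, hf, hgf⟩ := Finset.mem_biUnion.mp hg
    exact ⟨f, hf, (hmemOut.mp hgf).1.symm⟩
  have hdeg2eq : ∀ f ∈ T, (Finset.univ.filter fun g => τ g = τ f).card = 2 := by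
    intro f hf
    have h1 := hone f hf
    have h2 := hdeg2 (τ f)
    rw [hOutCard f] at h1
    omega
  -- closure of the vertex set of T
  have hclosed : ∀ g : E, (∃ f ∈ T, τ f = σ g) → ∃ f ∈ T, τ f = τ g := by
    intro g ⟨f, hf, hfg⟩
    by_cases hc : g = bar f
    · subst hc
      rw [hbar f]
      exact hsrc f hf
    · have : g ∈ Out f := hmemOut.mpr ⟨hfg.symm, hc⟩
      exact ⟨g, hOutT f hf this, rfl⟩
  have key : ∀ v : V, Relation.ReflTransGen (fun a b => ∃ e, σ e = a ∧ τ e = b) (τ e) v →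
      ∃ f ∈ T, τ f = v := by
    intro v hc
    induction hc with
    | refl => exact ⟨e, heT, rfl⟩
    | tail _ hstep ih =>
      obtain ⟨h', hh1, hh2⟩ := hstep
      rw [← hh2]
      exact hclosed h' (by rw [hh1]; exact ih)
  obtain ⟨w, hw⟩ := hdeg3
  have hwT : ∃ f ∈ T, τ f = w := key w (hconn (τ e) w)
  obtain ⟨f, hf, hfw⟩ := hwT
  have := hdeg2eq f hf
  rw [hfw] at this
  omega
end

section
/- Let G be a connected undirected graph in which every vertex has degree ≥ 2 and some vertex has degree ≥ 3. Then for any two edges e, f of G, there is an admissible path from e to f; consequently the flow graph \tilde{G} is strongly connected. -/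
namespace FlowAux

open Relation Finset

variable {E V : Type*}

/-- One admissible step in the flow graph. -/
def Step (σ τ : E → V) (bar : E → E) (a b : E) : Prop := τ a = σ b ∧ b ≠ bar a

section

variable {σ τ : E → V} {bar : E → E}

lemma sbar (hinv : ∀ e, bar (bar e) = e) (hbar : ∀ e, τ (bar e) = σ e) (e : E) :
    σ (bar e) = τ e := by
  have h := hbar (bar e); rw [hinv] at h; exact h.symm

lemma barinj (hinv : ∀ e, bar (bar e) = e) : Function.Injective bar :=
  Function.LeftInverse.injective hinv

lemma step_rev (hinv : ∀ e, bar (bar e) = e) (hbar : ∀ e, τ (bar e) = σ e)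
    {a b : E} (h : Step σ τ bar a b) : Step σ τ bar (bar b) (bar a) := by
  refine ⟨?_, ?_⟩
  · rw [hbar, sbar hinv hbar, h.1]
  · rw [hinv]; exact fun hh => h.2 hh.symm

lemma reach_rev (hinv : ∀ e, bar (bar e) = e) (hbar : ∀ e, τ (bar e) = σ e)
    {a b : E} (h : ReflTransGen (Step σ τ bar) a b) :
    ReflTransGen (Step σ τ bar) (bar b) (bar a) := by
  induction h with
  | refl => exact .refl
  | tail _ h2 ih => exact .head (step_rev hinv hbar h2) ih

lemma escape [Fintype E] [DecidableEq V]
    (hinv : ∀ e, bar (bar e) = e) (hbar : ∀ e, τ (bar e) = σ e)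
    (hdeg2 : ∀ v : V, 2 ≤ (Finset.univ.filter fun f => τ f = v).card)
    (e : E) : ∃ f, Step σ τ bar e f := by
  obtain ⟨x, hx, hxe⟩ := Finset.exists_mem_ne
    (lt_of_lt_of_le one_lt_two (hdeg2 (τ e))) e
  refine ⟨bar x, ?_, ?_⟩
  · rw [sbar hinv hbar]; exact ((Finset.mem_filter.mp hx).2).symm
  · exact fun hh => hxe (barinj hinv hh)

lemma exists_min [Fintype E] (σ τ : E → V) (bar : E → E) (e : E) :
    ∃ d, ReflTransGen (Step σ τ bar) e d ∧
      ∀ x, ReflTransGen (Step σ τ bar) d x → ReflTransGen (Step σ τ bar) x d := by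
  classical
  obtain ⟨d, hd, hmin⟩ := Finset.exists_min_image
    (Finset.univ.filter fun x => ReflTransGen (Step σ τ bar) e x)
    (fun x => (Finset.univ.filter fun y => ReflTransGen (Step σ τ bar) x y).card)
    ⟨e, Finset.mem_filter.mpr ⟨Finset.mem_univ _, .refl⟩⟩
  have hed : ReflTransGen (Step σ τ bar) e d := (Finset.mem_filter.mp hd).2
  refine ⟨d, hed, fun x hdx => ?_⟩
  have hx : x ∈ Finset.univ.filter fun y => ReflTransGen (Step σ τ bar) e y :=
    Finset.mem_filter.mpr ⟨Finset.mem_univ _, hed.trans hdx⟩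
  have hsub : (Finset.univ.filter fun y => ReflTransGen (Step σ τ bar) x y) ⊆
      (Finset.univ.filter fun y => ReflTransGen (Step σ τ bar) d y) :=
    fun y hy => Finset.mem_filter.mpr ⟨Finset.mem_univ _,
      hdx.trans (Finset.mem_filter.mp hy).2⟩
  have heq := Finset.eq_of_subset_of_card_le hsub (hmin x hx)
  have hdmem : d ∈ Finset.univ.filter fun y => ReflTransGen (Step σ τ bar) x y := by
    rw [heq]; exact Finset.mem_filter.mpr ⟨Finset.mem_univ _, .refl⟩
  exact (Finset.mem_filter.mp hdmem).2

lemma pred_mem [Fintype E] [DecidableEq V]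
    (hinv : ∀ e, bar (bar e) = e) (hbar : ∀ e, τ (bar e) = σ e)
    (hdeg2 : ∀ v : V, 2 ≤ (Finset.univ.filter fun f => τ f = v).card)
    {d₀ : E} (hmin : ∀ x, ReflTransGen (Step σ τ bar) d₀ x → ReflTransGen (Step σ τ bar) x d₀)
    {d : E} (hd : ReflTransGen (Step σ τ bar) d₀ d) :
    ∃ h, ReflTransGen (Step σ τ bar) d₀ h ∧ Step σ τ bar h d := by
  obtain ⟨f, hf⟩ := escape hinv hbar hdeg2 d
  have hfd : ReflTransGen (Step σ τ bar) f d :=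
    (hmin f (hd.tail hf)).trans hd
  have htg : TransGen (Step σ τ bar) d d := .head' hf hfd
  obtain ⟨h, h1, h2⟩ := (Relation.TransGen.tail'_iff).mp htg
  exact ⟨h, hd.trans h1, h2⟩

lemma cover [Fintype E] [DecidableEq V]
    (hinv : ∀ e, bar (bar e) = e) (hbar : ∀ e, τ (bar e) = σ e)
    (hconn : ∀ u v : V, Relation.ReflTransGen (fun a b => ∃ e, σ e = a ∧ τ e = b) u v)
    (hdeg2 : ∀ v : V, 2 ≤ (Finset.univ.filter fun f => τ f = v).card)
    {d₀ : E} (hmin : ∀ x, ReflTransGen (Step σ τ bar) d₀ x → ReflTransGen (Step σ τ bar) x d₀)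
    (v : V) : ∃ d, ReflTransGen (Step σ τ bar) d₀ d ∧ τ d = v := by
  have h := hconn (τ d₀) v
  induction h with
  | refl => exact ⟨d₀, .refl, rfl⟩
  | tail _ h2 ih =>
    obtain ⟨d, hd, hdv⟩ := ih
    obtain ⟨g, hg1, hg2⟩ := h2
    by_cases hgb : g = bar d
    · obtain ⟨h, hh, hstep⟩ := pred_mem hinv hbar hdeg2 hmin hd
      refine ⟨h, hh, ?_⟩
      rw [hstep.1, ← hbar d, ← hgb, hg2]
    · exact ⟨g, hd.tail ⟨hdv.trans hg1.symm, hgb⟩, hg2⟩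

lemma crux [Fintype E] [DecidableEq V]
    (hinv : ∀ e, bar (bar e) = e) (hbar : ∀ e, τ (bar e) = σ e)
    (hdeg2 : ∀ v : V, 2 ≤ (Finset.univ.filter fun f => τ f = v).card)
    (hdeg3 : ∃ v : V, 3 ≤ (Finset.univ.filter fun f => τ f = v).card)
    {d₀ : E}
    (hcov : ∀ v, ∃ d, ReflTransGen (Step σ τ bar) d₀ d ∧ τ d = v) :
    ∃ x, ReflTransGen (Step σ τ bar) d₀ x ∧ ReflTransGen (Step σ τ bar) d₀ (bar x) := by
  classical
  by_contra hcon
  push_neg at hcon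
  -- V is finite since τ is surjective
  have hsur : Function.Surjective τ := fun v => ⟨(hcov v).choose, (hcov v).choose_spec.2⟩
  haveI : Fintype V := Fintype.ofSurjective τ hsur
  set F : Finset E := Finset.univ.filter (fun x => ReflTransGen (Step σ τ bar) d₀ x) with hF
  choose xv hxv1 hxv2 using hcov
  -- uniqueness of the dart of F into each vertex
  have huniq : ∀ v y, ReflTransGen (Step σ τ bar) d₀ y → τ y = v → y = xv v := by
    intro v y hy hyv
    by_contra hne'
    have hstep : Step σ τ bar (xv v) (bar y) := by
      refine ⟨?_, ?_⟩
      · rw [hxv2 v, sbar hinv hbar, hyv]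
      · exact fun hh => hne' (barinj hinv hh)
    exact hcon y hy ((hxv1 v).tail hstep)
  have hfibτ : ∀ v, F.filter (fun x => τ x = v) = {xv v} := by
    intro v
    ext y
    simp only [Finset.mem_filter, Finset.mem_singleton, hF, Finset.mem_univ, true_and]
    constructor
    · rintro ⟨hy, hyv⟩; exact huniq v y hy hyv
    · rintro rfl; exact ⟨hxv1 v, hxv2 v⟩
  have hfibσ : ∀ v, F.filter (fun x => σ x = v) =
      (Finset.univ.filter fun x => σ x = v).erase (bar (xv v)) := by
    intro v
    ext g
    simp only [Finset.mem_filter, Finset.mem_erase, hF, Finset.mem_univ, true_and]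
    constructor
    · rintro ⟨hg, hgv⟩
      refine ⟨?_, hgv⟩
      rintro rfl
      exact hcon (xv v) (hxv1 v) hg
    · rintro ⟨hgne, hgv⟩
      refine ⟨(hxv1 v).tail ⟨?_, hgne⟩, hgv⟩
      rw [hxv2 v, hgv]
  -- out-degree equals in-degree via bar
  have hdegeq : ∀ v : V, (Finset.univ.filter fun x => σ x = v).card =
      (Finset.univ.filter fun x => τ x = v).card := by
    intro v
    have himg : (Finset.univ.filter fun x => τ x = v).image bar =
        (Finset.univ.filter fun x => σ x = v) := by
      ext g
      simp only [Finset.mem_image, Finset.mem_filter, Finset.mem_univ, true_and]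
      constructor
      · rintro ⟨a, ha, rfl⟩; rw [sbar hinv hbar]; exact ha
      · intro hg; exact ⟨bar g, by rw [hbar]; exact hg, hinv g⟩
    rw [← himg, Finset.card_image_of_injective _ (barinj hinv)]
  have hbarmem : ∀ v : V, bar (xv v) ∈ Finset.univ.filter fun x => σ x = v := by
    intro v
    exact Finset.mem_filter.mpr ⟨Finset.mem_univ _, by rw [sbar hinv hbar, hxv2 v]⟩
  have hcardσ : ∀ v : V, (F.filter (fun x => σ x = v)).card =
      (Finset.univ.filter fun x => τ x = v).card - 1 := by
    intro v
    rw [hfibσ v, Finset.card_erase_of_mem (hbarmem v), hdegeq v]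
  have hcardτ : ∀ v : V, (F.filter (fun x => τ x = v)).card = 1 := by
    intro v; rw [hfibτ v, Finset.card_singleton]
  have hsum1 : F.card = ∑ v : V, (F.filter (fun x => τ x = v)).card :=
    Finset.card_eq_sum_card_fiberwise (fun x _ => Finset.mem_univ (τ x))
  have hsum2 : F.card = ∑ v : V, (F.filter (fun x => σ x = v)).card :=
    Finset.card_eq_sum_card_fiberwise (fun x _ => Finset.mem_univ (σ x))
  obtain ⟨w, hw⟩ := hdeg3
  have hlt : (∑ v : V, (F.filter (fun x => τ x = v)).card) <
      ∑ v : V, (F.filter (fun x => σ x = v)).card := by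
    refine Finset.sum_lt_sum (fun v _ => ?_) ⟨w, Finset.mem_univ w, ?_⟩
    · rw [hcardτ v, hcardσ v]
      have hh2 := hdeg2 v
      omega
    · rw [hcardτ w, hcardσ w]
      omega
  rw [← hsum1, ← hsum2] at hlt
  exact lt_irrefl _ hlt

lemma good [Fintype E] [DecidableEq V]
    (hinv : ∀ e, bar (bar e) = e) (hbar : ∀ e, τ (bar e) = σ e)
    (hconn : ∀ u v : V, Relation.ReflTransGen (fun a b => ∃ e, σ e = a ∧ τ e = b) u v)
    (hdeg2 : ∀ v : V, 2 ≤ (Finset.univ.filter fun f => τ f = v).card)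
    (hdeg3 : ∃ v : V, 3 ≤ (Finset.univ.filter fun f => τ f = v).card)
    (e : E) : ReflTransGen (Step σ τ bar) e (bar e) := by
  obtain ⟨d₀, hed, hmin⟩ := exists_min σ τ bar e
  obtain ⟨x, hx1, hx2⟩ := crux hinv hbar hdeg2 hdeg3
    (cover hinv hbar hconn hdeg2 hmin)
  have hex : ReflTransGen (Step σ τ bar) e x := hed.trans hx1
  have hrev : ReflTransGen (Step σ τ bar) (bar x) (bar e) := reach_rev hinv hbar hex
  exact (hed.trans hx2).trans hrev

lemma reach_out [Fintype E] [DecidableEq V]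
    (hinv : ∀ e, bar (bar e) = e) (hbar : ∀ e, τ (bar e) = σ e)
    (hconn : ∀ u v : V, Relation.ReflTransGen (fun a b => ∃ e, σ e = a ∧ τ e = b) u v)
    (hdeg2 : ∀ v : V, 2 ≤ (Finset.univ.filter fun f => τ f = v).card)
    (hdeg3 : ∃ v : V, 3 ≤ (Finset.univ.filter fun f => τ f = v).card)
    (e g : E) (hg : σ g = τ e) : ReflTransGen (Step σ τ bar) e g := by
  by_cases hgb : g = bar e
  · rw [hgb]; exact good hinv hbar hconn hdeg2 hdeg3 e
  · exact .single ⟨hg.symm, hgb⟩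

lemma reach_all [Fintype E] [DecidableEq V]
    (hinv : ∀ e, bar (bar e) = e) (hbar : ∀ e, τ (bar e) = σ e)
    (hconn : ∀ u v : V, Relation.ReflTransGen (fun a b => ∃ e, σ e = a ∧ τ e = b) u v)
    (hdeg2 : ∀ v : V, 2 ≤ (Finset.univ.filter fun f => τ f = v).card)
    (hdeg3 : ∃ v : V, 3 ≤ (Finset.univ.filter fun f => τ f = v).card)
    (e f : E) : ReflTransGen (Step σ τ bar) e f := by
  have key : ∀ v : V, Relation.ReflTransGen (fun a b => ∃ e, σ e = a ∧ τ e = b) (τ e) v →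
      ∀ g : E, σ g = v → ReflTransGen (Step σ τ bar) e g := by
    intro v hv
    induction hv with
    | refl => exact fun g hg => reach_out hinv hbar hconn hdeg2 hdeg3 e g hg
    | tail _ h2 ih =>
      intro g hg
      obtain ⟨k, hk1, hk2⟩ := h2
      exact (ih k hk1).trans
        (reach_out hinv hbar hconn hdeg2 hdeg3 k g (hg.trans hk2.symm))
  exact key (σ f) (hconn (τ e) (σ f)) f rfl

lemma reach_admconn (σ τ : E → V) (bar : E → E) {e f : E}
    (h : ReflTransGen (Step σ τ bar) e f) : AdmConn σ τ bar e f := by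
  induction h with
  | refl => exact ⟨[e], rfl, rfl, List.isChain_singleton e⟩
  | @tail b c h1 h2 ih =>
    obtain ⟨p, hh, hl, hc⟩ := ih
    refine ⟨p ++ [c], ?_, ?_, ?_⟩
    · cases p with
      | nil => simp at hh
      | cons a q => simpa using hh
    · simp [List.getLast?_concat]
    · refine List.isChain_append.mpr ⟨hc, List.isChain_singleton _, ?_⟩
      intro x hx y hy
      simp only [List.head?_cons, Option.mem_some_iff] at hy
      rw [hl] at hx
      simp only [Option.mem_some_iff] at hx
      subst hx; subst hy
      exact h2

end

end FlowAux

/-- Let `G` be a connected undirected graph in which every vertex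
has degree ≥ 2 and some vertex has degree ≥ 3.  Then for any two edges `e, f`
there is an admissible path from `e` to `f`; consequently the flow graph `G̃`
(vertices: edges of `G`; directed edges `(a,b)` with `τ a = σ b`, `b ≠ bar a`)
is strongly connected. -/
theorem flow_graph_strongly_connected
    {E V : Type*} [Fintype E] [DecidableEq V] (σ τ : E → V) (bar : E → E)
    (hinv : ∀ e, bar (bar e) = e) (hne : ∀ e, bar e ≠ e)
    (hbar : ∀ e, τ (bar e) = σ e)
    (hconn : ∀ u v : V, Relation.ReflTransGen (fun a b => ∃ e, σ e = a ∧ τ e = b) u v)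
    (hdeg2 : ∀ v : V, 2 ≤ (Finset.univ.filter fun f => τ f = v).card)
    (hdeg3 : ∃ v : V, 3 ≤ (Finset.univ.filter fun f => τ f = v).card) :
    (∀ e f : E, AdmConn σ τ bar e f) ∧
    (∀ e f : E, Relation.ReflTransGen (fun a b => τ a = σ b ∧ b ≠ bar a) e f) := by
  have key : ∀ e f : E, Relation.ReflTransGen (FlowAux.Step σ τ bar) e f :=
    fun e f => FlowAux.reach_all hinv hbar hconn hdeg2 hdeg3 e f
  exact ⟨fun e f => FlowAux.reach_admconn σ τ bar (key e f), key⟩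
end

section
/- Let B be a bipartite graph, connected, with all check nodes of degree 2, all bit nodes of degree ≥ 2, and some bit node of degree ≥ 3, and suppose the flow matrix K is primitive with Perron eigenvalue ρ, right Perron vector z and left Perron vector y* with y*z = 1. Set c = y*Λ. Then for every edge e, lim_{t→∞} (x_e^{(t)})^{(ρ−1)/(ρ^t−1)} = (u^c)^{z_e}; consequently x_e^{(t)} → 0 for all e when u^c < 1 and x_e^{(t)} → ∞ for all e when u^c > 1. -/
open Filter Finset

section aux
variable {E : Type*} [Fintype E] [DecidableEq E] [Nonempty E]

lemma spa_avg_bounds (Q : E → E → ℝ) (w : E → ℝ) (hQ0 : ∀ e f, 0 ≤ Q e f)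
    (hQ1 : ∀ e, ∑ f, Q e f = 1) (e : E) :
    Finset.univ.inf' Finset.univ_nonempty w ≤ ∑ f, Q e f * w f ∧
      ∑ f, Q e f * w f ≤ Finset.univ.sup' Finset.univ_nonempty w := by
  constructor
  · calc Finset.univ.inf' Finset.univ_nonempty w
        = ∑ f, Q e f * Finset.univ.inf' Finset.univ_nonempty w := by
          rw [← Finset.sum_mul, hQ1, one_mul]
      _ ≤ ∑ f, Q e f * w f :=
          Finset.sum_le_sum fun f _ =>
            mul_le_mul_of_nonneg_left (Finset.inf'_le _ (Finset.mem_univ f)) (hQ0 e f)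
  · calc ∑ f, Q e f * w f
        ≤ ∑ f, Q e f * Finset.univ.sup' Finset.univ_nonempty w :=
          Finset.sum_le_sum fun f _ =>
            mul_le_mul_of_nonneg_left (Finset.le_sup' _ (Finset.mem_univ f)) (hQ0 e f)
      _ = Finset.univ.sup' Finset.univ_nonempty w := by rw [← Finset.sum_mul, hQ1, one_mul]

lemma spa_avg_contract (Q : E → E → ℝ) (w : E → ℝ) (hQ0 : ∀ e f, 0 ≤ Q e f)
    (hQ1 : ∀ e, ∑ f, Q e f = 1) (ε : ℝ) (hε : ∀ e f, ε ≤ Q e f) (e : E) :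
    ∑ f, Q e f * w f ≤ Finset.univ.sup' Finset.univ_nonempty w -
        ε * (Finset.univ.sup' Finset.univ_nonempty w - Finset.univ.inf' Finset.univ_nonempty w) ∧
      Finset.univ.inf' Finset.univ_nonempty w +
        ε * (Finset.univ.sup' Finset.univ_nonempty w - Finset.univ.inf' Finset.univ_nonempty w) ≤
        ∑ f, Q e f * w f := by
  set S := Finset.univ.sup' Finset.univ_nonempty w with hS
  set I := Finset.univ.inf' Finset.univ_nonempty w with hI
  have hd : 0 ≤ S - I := by
    obtain ⟨a⟩ := (inferInstance : Nonempty E)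
    have h1 : I ≤ w a := Finset.inf'_le _ (Finset.mem_univ a)
    have h2 : w a ≤ S := Finset.le_sup' _ (Finset.mem_univ a)
    linarith
  constructor
  · obtain ⟨f0, -, hf0⟩ := Finset.exists_mem_eq_inf' (Finset.univ_nonempty (α := E)) w
    have hsplit : ∑ f, Q e f * w f
        = Q e f0 * w f0 + ∑ f ∈ Finset.univ.erase f0, Q e f * w f :=
      (Finset.add_sum_erase _ _ (Finset.mem_univ f0)).symm
    have hrow : Q e f0 + ∑ f ∈ Finset.univ.erase f0, Q e f = 1 := by
      rw [Finset.add_sum_erase _ _ (Finset.mem_univ f0)]; exact hQ1 e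
    have h2 : ∑ f ∈ Finset.univ.erase f0, Q e f * w f
        ≤ (∑ f ∈ Finset.univ.erase f0, Q e f) * S := by
      rw [Finset.sum_mul]
      exact Finset.sum_le_sum fun f _ =>
        mul_le_mul_of_nonneg_left (Finset.le_sup' _ (Finset.mem_univ f)) (hQ0 e f)
    have hεf : ε ≤ Q e f0 := hε e f0
    have hT : ∑ f ∈ Finset.univ.erase f0, Q e f = 1 - Q e f0 := by linarith
    have h2' : ∑ f ∈ Finset.univ.erase f0, Q e f * w f ≤ (1 - Q e f0) * S := by
      rw [← hT]; exact h2
    have hw0 : w f0 = I := hf0.symm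
    rw [hw0] at hsplit
    nlinarith [mul_nonneg (sub_nonneg.2 hεf) hd]
  · obtain ⟨f1, -, hf1⟩ := Finset.exists_mem_eq_sup' (Finset.univ_nonempty (α := E)) w
    have hsplit : ∑ f, Q e f * w f
        = Q e f1 * w f1 + ∑ f ∈ Finset.univ.erase f1, Q e f * w f :=
      (Finset.add_sum_erase _ _ (Finset.mem_univ f1)).symm
    have hrow : Q e f1 + ∑ f ∈ Finset.univ.erase f1, Q e f = 1 := by
      rw [Finset.add_sum_erase _ _ (Finset.mem_univ f1)]; exact hQ1 e
    have h2 : (∑ f ∈ Finset.univ.erase f1, Q e f) * I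
        ≤ ∑ f ∈ Finset.univ.erase f1, Q e f * w f := by
      rw [Finset.sum_mul]
      exact Finset.sum_le_sum fun f _ =>
        mul_le_mul_of_nonneg_left (Finset.inf'_le _ (Finset.mem_univ f)) (hQ0 e f)
    have hεf : ε ≤ Q e f1 := hε e f1
    have hT : ∑ f ∈ Finset.univ.erase f1, Q e f = 1 - Q e f1 := by linarith
    have h2' : (1 - Q e f1) * I ≤ ∑ f ∈ Finset.univ.erase f1, Q e f * w f := by
      rw [← hT]; exact h2
    have hw1 : w f1 = S := hf1.symm
    rw [hw1] at hsplit
    nlinarith [mul_nonneg (sub_nonneg.2 hεf) hd]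

end aux

lemma spa_cesaro_geom {ρ : ℝ} (hρ : 1 < ρ) {a : ℕ → ℝ} {A : ℝ}
    (ha : Tendsto a atTop (nhds A)) :
    Tendsto (fun t : ℕ => ((ρ - 1) / (ρ ^ t - 1)) * ∑ i ∈ Finset.range t, ρ ^ i * a i)
      atTop (nhds A) := by
  have hρ1 : ρ ≠ 1 := ne_of_gt hρ
  have hρ0 : (0:ℝ) < ρ - 1 := by linarith
  have hgs : ∀ t : ℕ, ∑ i ∈ Finset.range t, ρ ^ i = (ρ ^ t - 1) / (ρ - 1) :=
    fun t => geom_sum_eq hρ1 t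
  have hgtop : Tendsto (fun t : ℕ => ∑ i ∈ Finset.range t, ρ ^ i) atTop atTop := by
    have h1 : Tendsto (fun t : ℕ => ρ ^ t) atTop atTop := tendsto_pow_atTop_atTop_of_one_lt hρ
    have h2 : Tendsto (fun t : ℕ => (ρ ^ t - 1) / (ρ - 1)) atTop atTop :=
      (h1.atTop_add tendsto_const_nhds).atTop_div_const hρ0
    exact h2.congr fun t => (hgs t).symm
  have hlo : (fun i : ℕ => ρ ^ i * (a i - A)) =o[atTop] (fun i : ℕ => ρ ^ i) := by
    have h0 : (fun i : ℕ => a i - A) =o[atTop] (fun _ : ℕ => (1:ℝ)) :=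
      (Asymptotics.isLittleO_one_iff ℝ).2 (tendsto_sub_nhds_zero_iff.2 ha)
    have := h0.mul_isBigO (Asymptotics.isBigO_refl (fun i : ℕ => ρ ^ i) atTop)
    simpa [mul_comm] using this
  have hsum := hlo.sum_range (fun i => pow_nonneg (by linarith) i) hgtop
  have hzero := hsum.tendsto_div_nhds_zero
  have key : ∀ᶠ t in atTop,
      (∑ i ∈ Finset.range t, ρ ^ i * (a i - A)) / (∑ i ∈ Finset.range t, ρ ^ i) + A
        = ((ρ - 1) / (ρ ^ t - 1)) * ∑ i ∈ Finset.range t, ρ ^ i * a i := by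
    filter_upwards [eventually_ge_atTop 1] with t ht
    have h1 : (1:ℝ) < ρ ^ t := one_lt_pow₀ hρ (by omega)
    have h2 : ρ ^ t - 1 ≠ 0 := ne_of_gt (by linarith)
    have h3 : ∑ i ∈ Finset.range t, ρ ^ i * (a i - A)
        = (∑ i ∈ Finset.range t, ρ ^ i * a i) - A * ∑ i ∈ Finset.range t, ρ ^ i := by
      rw [Finset.mul_sum, ← Finset.sum_sub_distrib]
      exact Finset.sum_congr rfl fun i _ => by ring
    rw [h3, hgs t]
    field_simp
    ring
  have := hzero.add (tendsto_const_nhds (x := A))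
  rw [zero_add] at this
  exact this.congr' key

/-- Let `B` be a connected bipartite graph with all check nodes of
degree 2 (encoded by bit-node set `L`, edge set `E`, source map `lam : E → L`
and the fixed-point-free conjugation `bar` pairing the two edges at each check),
all bit nodes of degree ≥ 2 and some bit node of degree ≥ 3.  Let `Λ` be the
edge–bit incidence matrix and `K` the flow matrix
(`K e f = 1` iff `lam (bar f) = lam e` and `bar f ≠ e`), and suppose `K` is
primitive with Perron eigenvalue `ρ`, right Perron vector `z` and left Perron
vector `y*` (positive eigenvectors) with `y* z = 1`.  Set `c = y* Λ`.  The SPA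
messages are `x⁽ᵗ⁾_e = u^{a⁽ᵗ⁾_e}` with `A⁽ᵗ⁾ = (Σ_{i<t} K^i) Λ`.  Then for
every edge `e`,
`lim_{t→∞} (x⁽ᵗ⁾_e)^{(ρ−1)/(ρ^t−1)} = (u^c)^{z_e}`; consequently
`x⁽ᵗ⁾_e → 0` for all `e` when `u^c < 1`, and `x⁽ᵗ⁾_e → ∞` for all `e` when
`u^c > 1`. -/
theorem spa_convergence_primitive
    {E L : Type*} [Fintype E] [DecidableEq E] [Fintype L] [DecidableEq L]
    (lam : E → L) (bar : E → E)
    (hinv : ∀ e, bar (bar e) = e) (hne : ∀ e, bar e ≠ e)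
    (hconn : ∀ a b : L,
      Relation.ReflTransGen (fun a b => ∃ e, lam e = a ∧ lam (bar e) = b) a b)
    (hdeg2 : ∀ ℓ : L, 2 ≤ (Finset.univ.filter fun e => lam e = ℓ).card)
    (hdeg3 : ∃ ℓ : L, 3 ≤ (Finset.univ.filter fun e => lam e = ℓ).card)
    (Lam : Matrix E L ℝ) (hLam : ∀ e ℓ, Lam e ℓ = if lam e = ℓ then 1 else 0)
    (K : Matrix E E ℝ)
    (hK : ∀ e f, K e f = if lam (bar f) = lam e ∧ bar f ≠ e then 1 else 0)
    (hprim : ∃ r : ℕ, 0 < r ∧ ∀ e f, 0 < (K ^ r) e f)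
    (ρ : ℝ) (z y : E → ℝ) (hz : ∀ e, 0 < z e) (hy : ∀ e, 0 < y e)
    (hez : K.mulVec z = ρ • z) (hey : Matrix.vecMul y K = ρ • y)
    (hnorm : ∑ e, y e * z e = 1)
    (u : L → ℝ) (hu : ∀ ℓ, 0 < u ℓ)
    (x : ℕ → E → ℝ)
    (hx : ∀ t e, x t e =
      ∏ ℓ, u ℓ ^ (((∑ i ∈ Finset.range t, K ^ i) * Lam) e ℓ)) :
    (∀ e, Tendsto (fun t : ℕ => (x t e) ^ ((ρ - 1) / (ρ ^ t - 1)))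
      atTop (nhds ((∏ ℓ, u ℓ ^ (∑ e', y e' * Lam e' ℓ)) ^ (z e)))) ∧
    ((∏ ℓ, u ℓ ^ (∑ e', y e' * Lam e' ℓ)) < 1 →
      ∀ e, Tendsto (fun t => x t e) atTop (nhds 0)) ∧
    (1 < (∏ ℓ, u ℓ ^ (∑ e', y e' * Lam e' ℓ)) →
      ∀ e, Tendsto (fun t => x t e) atTop atTop) := by
  classical
  obtain ⟨ℓ₀, hℓ₀⟩ := hdeg3
  obtain ⟨e₀, he₀⟩ : ∃ e : E, lam e = ℓ₀ := by
    obtain ⟨e, he⟩ := Finset.card_pos.mp (by omega :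
      0 < (Finset.univ.filter fun e => lam e = ℓ₀).card)
    exact ⟨e, (Finset.mem_filter.mp he).2⟩
  haveI : Nonempty E := ⟨e₀⟩
  set v : E → ℝ := fun e => Real.log (u (lam e)) with hv
  set α : ℝ := ∑ e, y e * v e with hα
  -- nonnegativity
  have hK0 : ∀ e f, 0 ≤ K e f := by
    intro e f; rw [hK]; split <;> norm_num
  have hKn0 : ∀ (n : ℕ) e f, 0 ≤ (K ^ n) e f := by
    intro n
    induction n with
    | zero => intro e f; rw [pow_zero, Matrix.one_apply]; split <;> norm_num
    | succ n ih =>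
      intro e f
      rw [pow_succ, Matrix.mul_apply]
      exact Finset.sum_nonneg fun g _ => mul_nonneg (ih e g) (hK0 g f)
  -- eigen-equations for powers
  have hKnz : ∀ n : ℕ, (K ^ n).mulVec z = (ρ ^ n) • z := by
    intro n
    induction n with
    | zero => simp
    | succ n ih =>
      rw [pow_succ', ← Matrix.mulVec_mulVec, ih, Matrix.mulVec_smul, hez,
        smul_smul, pow_succ, mul_comm]
  have hyKn : ∀ n : ℕ, Matrix.vecMul y (K ^ n) = (ρ ^ n) • y := by
    intro n
    induction n with
    | zero => simp
    | succ n ih =>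
      rw [pow_succ, ← Matrix.vecMul_vecMul, ih, Matrix.smul_vecMul, hey,
        smul_smul, pow_succ, mul_comm]
  -- row sums of K
  have hrow : ∀ e, ∑ f, K e f
      = ((Finset.univ.filter fun g => lam g = lam e).card : ℝ) - 1 := by
    intro e
    have h1 : ∑ f, K e f
        = ∑ g, (if lam g = lam e ∧ g ≠ e then (1:ℝ) else 0) := by
      rw [← Equiv.sum_comp (Function.Involutive.toPerm bar hinv)
        (fun g => if lam g = lam e ∧ g ≠ e then (1:ℝ) else 0)]
      exact Finset.sum_congr rfl fun f _ => by rw [hK]; rfl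
    rw [h1, Finset.sum_boole]
    have h2 : (Finset.univ.filter fun g => lam g = lam e ∧ g ≠ e)
        = (Finset.univ.filter fun g => lam g = lam e).erase e := by
      ext g; simp [Finset.mem_erase, and_comm]
    have hmem : e ∈ Finset.univ.filter fun g => lam g = lam e := by simp
    have h3 := Finset.card_erase_of_mem hmem
    rw [h2, h3]
    have h4 : 1 ≤ (Finset.univ.filter fun g => lam g = lam e).card :=
      Finset.card_pos.mpr ⟨e, hmem⟩
    push_cast [Nat.cast_sub h4]
    ring
  -- ρ > 1
  have hypos : (0:ℝ) < ∑ e, y e :=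
    Finset.sum_pos (fun e _ => hy e) Finset.univ_nonempty
  have hρ : 1 < ρ := by
    have h1 : ∑ f, Matrix.vecMul y K f = ∑ f, (ρ • y) f := by rw [hey]
    have h2 : ∑ f, Matrix.vecMul y K f = ∑ e, y e * (∑ f, K e f) := by
      simp only [Matrix.vecMul, dotProduct]
      rw [Finset.sum_comm]
      exact Finset.sum_congr rfl fun e _ => by rw [Finset.mul_sum]
    have h3 : ∑ f, (ρ • y) f = ρ * ∑ e, y e := by
      simp [Finset.mul_sum]
    have h4 : ∑ e, y e * 1 < ∑ e, y e * (∑ f, K e f) := by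
      apply Finset.sum_lt_sum
      · intro e _
        have := hdeg2 (lam e)
        rw [hrow e]
        have : (2:ℝ) ≤ ((Finset.univ.filter fun g => lam g = lam e).card : ℝ) := by
          exact_mod_cast hdeg2 (lam e)
        nlinarith [(hy e).le]
      · refine ⟨e₀, Finset.mem_univ _, ?_⟩
        rw [hrow e₀]
        have : (3:ℝ) ≤ ((Finset.univ.filter fun g => lam g = lam e₀).card : ℝ) := by
          rw [he₀]; exact_mod_cast hℓ₀
        nlinarith [hy e₀]
    rw [h2, h3] at h1
    simp only [mul_one] at h4
    nlinarith
  have hρ0 : (0:ℝ) < ρ := by linarith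
  have hρn : ∀ n : ℕ, (0:ℝ) < ρ ^ n := fun n => pow_pos hρ0 n
  -- normalized iterates and transition weights
  set w : ℕ → E → ℝ := fun t e => (K ^ t).mulVec v e / (ρ ^ t * z e) with hwdef
  set Q : ℕ → E → E → ℝ := fun n e f => (K ^ n) e f * z f / (ρ ^ n * z e) with hQdef
  have hQ0 : ∀ n e f, 0 ≤ Q n e f := fun n e f =>
    div_nonneg (mul_nonneg (hKn0 n e f) (hz f).le)
      (mul_nonneg (hρn n).le (hz e).le)
  have hKnzrow : ∀ n e, ∑ f, (K ^ n) e f * z f = ρ ^ n * z e := by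
    intro n e
    have := congrFun (hKnz n) e
    simpa [Matrix.mulVec, dotProduct] using this
  have hQ1 : ∀ n e, ∑ f, Q n e f = 1 := by
    intro n e
    rw [hQdef]
    simp only
    rw [← Finset.sum_div, hKnzrow n e, div_self (mul_pos (hρn n) (hz e)).ne']
  have hstep : ∀ n t e, w (t + n) e = ∑ f, Q n e f * w t f := by
    intro n t e
    have hpow : K ^ (t + n) = K ^ n * K ^ t := by rw [add_comm, pow_add]
    have h1 : (K ^ (t + n)).mulVec v e
        = ∑ f, (K ^ n) e f * (K ^ t).mulVec v f := by
      rw [hpow, ← Matrix.mulVec_mulVec]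
      simp [Matrix.mulVec, dotProduct]
    rw [hwdef]
    simp only
    rw [h1, Finset.sum_div]
    refine Finset.sum_congr rfl fun f _ => ?_
    rw [hQdef]
    simp only
    have hzf := (hz f).ne'
    have hze := (hz e).ne'
    have h2 : ρ ^ (t + n) = ρ ^ n * ρ ^ t := by rw [add_comm, pow_add]
    field_simp [h2]
    ring
  -- sup/inf dynamics
  set mx : ℕ → ℝ := fun t => Finset.univ.sup' Finset.univ_nonempty (w t) with hmxdef
  set mn : ℕ → ℝ := fun t => Finset.univ.inf' Finset.univ_nonempty (w t) with hmndef
  have hub : ∀ n t e, w (t + n) e ≤ mx t := by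
    intro n t e
    rw [hstep n t e]
    exact (spa_avg_bounds (Q n) (w t) (hQ0 n) (hQ1 n) e).2
  have hlb : ∀ n t e, mn t ≤ w (t + n) e := by
    intro n t e
    rw [hstep n t e]
    exact (spa_avg_bounds (Q n) (w t) (hQ0 n) (hQ1 n) e).1
  have hmx : ∀ n t, mx (t + n) ≤ mx t := fun n t =>
    Finset.sup'_le _ _ fun e _ => hub n t e
  have hmn : ∀ n t, mn t ≤ mn (t + n) := fun n t =>
    Finset.le_inf' _ _ fun e _ => hlb n t e
  have hmnmx : ∀ t, mn t ≤ mx t := fun t =>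
    le_trans (Finset.inf'_le _ (Finset.mem_univ e₀)) (Finset.le_sup' _ (Finset.mem_univ e₀))
  -- the invariant functional
  have hπ : ∀ t, ∑ e', (y e' * z e') * w t e' = α := by
    intro t
    have h1 : ∑ e', y e' * ((K ^ t).mulVec v e') = ρ ^ t * α := by
      calc ∑ e', y e' * ((K ^ t).mulVec v e')
          = ∑ e', ∑ f, y e' * ((K ^ t) e' f * v f) := by
            refine Finset.sum_congr rfl fun e' _ => ?_
            simp [Matrix.mulVec, dotProduct, Finset.mul_sum]
        _ = ∑ f, ∑ e', y e' * ((K ^ t) e' f * v f) := Finset.sum_comm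
        _ = ∑ f, (Matrix.vecMul y (K ^ t)) f * v f := by
            refine Finset.sum_congr rfl fun f _ => ?_
            simp only [Matrix.vecMul, dotProduct]
            rw [Finset.sum_mul]
            exact Finset.sum_congr rfl fun e' _ => by ring
        _ = ∑ f, ρ ^ t * y f * v f := by
            rw [hyKn t]
            exact Finset.sum_congr rfl fun f _ => by
              simp only [Pi.smul_apply, smul_eq_mul, mul_assoc]
        _ = ρ ^ t * α := by
            rw [hα, Finset.mul_sum]
            exact Finset.sum_congr rfl fun f _ => by ring
    calc ∑ e', (y e' * z e') * w t e'
        = ∑ e', y e' * ((K ^ t).mulVec v e') / ρ ^ t := by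
          refine Finset.sum_congr rfl fun e' _ => ?_
          rw [hwdef]
          simp only
          have := (hz e').ne'
          field_simp
      _ = (∑ e', y e' * ((K ^ t).mulVec v e')) / ρ ^ t := by rw [Finset.sum_div]
      _ = α := by rw [h1]; field_simp
  have hαmem : ∀ t, mn t ≤ α ∧ α ≤ mx t := by
    intro t
    have := spa_avg_bounds (fun _ f => y f * z f) (w t)
      (fun _ f => (mul_pos (hy f) (hz f)).le) (fun _ => hnorm) e₀
    rw [hπ t] at this
    exact this
  -- contraction constant
  obtain ⟨r, hr0, hrpos⟩ := hprim
  haveI : Nonempty (E × E) := inferInstance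
  set ε : ℝ := Finset.univ.inf' Finset.univ_nonempty (fun p : E × E => Q r p.1 p.2)
    with hεdef
  have hεpos : 0 < ε := by
    rw [hεdef, Finset.lt_inf'_iff]
    intro p _
    exact div_pos (mul_pos (hrpos p.1 p.2) (hz p.2)) (mul_pos (hρn r) (hz p.1))
  have hεle : ∀ e f, ε ≤ Q r e f := fun e f =>
    Finset.inf'_le _ (Finset.mem_univ (e, f))
  have hεhalf : 2 * ε ≤ 1 := by
    have hcard : 1 < Fintype.card E := by
      have h1 : (3:ℕ) ≤ Fintype.card E :=
        le_trans hℓ₀ (le_trans (Finset.card_filter_le _ _) (le_of_eq (Finset.card_univ)))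
      omega
    obtain ⟨a, b, hab⟩ := Fintype.exists_pair_of_one_lt_card hcard
    have h2 : Q r e₀ a + Q r e₀ b ≤ ∑ f, Q r e₀ f := by
      have := Finset.sum_le_sum_of_subset_of_nonneg
        (Finset.subset_univ ({a, b} : Finset E)) (fun f _ _ => hQ0 r e₀ f)
      rwa [Finset.sum_pair hab] at this
    rw [hQ1 r e₀] at h2
    have := hεle e₀ a
    have := hεle e₀ b
    linarith
  -- contraction
  have hcontr : ∀ t, mx (t + r) - mn (t + r) ≤ (1 - 2 * ε) * (mx t - mn t) := by
    intro t
    have hub' : ∀ e, w (t + r) e ≤ mx t - ε * (mx t - mn t) := by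
      intro e
      rw [hstep r t e]
      exact (spa_avg_contract (Q r) (w t) (hQ0 r) (hQ1 r) ε hεle e).1
    have hlb' : ∀ e, mn t + ε * (mx t - mn t) ≤ w (t + r) e := by
      intro e
      rw [hstep r t e]
      exact (spa_avg_contract (Q r) (w t) (hQ0 r) (hQ1 r) ε hεle e).2
    have h1 : mx (t + r) ≤ mx t - ε * (mx t - mn t) :=
      Finset.sup'_le _ _ fun e _ => hub' e
    have h2 : mn t + ε * (mx t - mn t) ≤ mn (t + r) :=
      Finset.le_inf' _ _ fun e _ => hlb' e
    nlinarith
  set c : ℝ := 1 - 2 * ε with hcdef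
  have hc0 : 0 ≤ c := by rw [hcdef]; linarith
  have hc1 : c < 1 := by rw [hcdef]; linarith
  have hdk : ∀ s k, mx (s + r * k) - mn (s + r * k) ≤ c ^ k * (mx s - mn s) := by
    intro s k
    induction k with
    | zero => simp
    | succ k ih =>
      have h1 : s + r * (k + 1) = (s + r * k) + r := by ring
      rw [h1]
      calc mx ((s + r * k) + r) - mn ((s + r * k) + r)
          ≤ c * (mx (s + r * k) - mn (s + r * k)) := hcontr _
        _ ≤ c * (c ^ k * (mx s - mn s)) := mul_le_mul_of_nonneg_left ih hc0
        _ = c ^ (k + 1) * (mx s - mn s) := by ring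
  have hd0le : ∀ n, mx n - mn n ≤ mx 0 - mn 0 := by
    intro n
    have h1 : mx (0 + n) ≤ mx 0 := hmx n 0
    have h2 : mn 0 ≤ mn (0 + n) := hmn n 0
    simp only [zero_add] at h1 h2
    linarith
  have hdle : ∀ t, mx t - mn t ≤ c ^ (t / r) * (mx 0 - mn 0) := by
    intro t
    have h1 : t = t % r + r * (t / r) := (Nat.mod_add_div t r).symm
    calc mx t - mn t = mx (t % r + r * (t / r)) - mn (t % r + r * (t / r)) := by rw [← h1]
      _ ≤ c ^ (t / r) * (mx (t % r) - mn (t % r)) := hdk _ _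
      _ ≤ c ^ (t / r) * (mx 0 - mn 0) :=
          mul_le_mul_of_nonneg_left (hd0le _) (pow_nonneg hc0 _)
  have hdiv : Tendsto (fun t : ℕ => t / r) atTop atTop := by
    refine Filter.tendsto_atTop_atTop.2 fun b => ⟨b * r, fun a ha => ?_⟩
    exact (Nat.le_div_iff_mul_le hr0).2 ha
  have hgeo : Tendsto (fun t : ℕ => c ^ (t / r) * (mx 0 - mn 0)) atTop (nhds 0) := by
    have h1 : Tendsto (fun k : ℕ => c ^ k) atTop (nhds 0) :=
      tendsto_pow_atTop_nhds_zero_of_lt_one hc0 hc1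
    have h2 := (h1.comp hdiv).mul_const (mx 0 - mn 0)
    rwa [zero_mul] at h2
  have hdtend : Tendsto (fun t => mx t - mn t) atTop (nhds 0) := by
    refine tendsto_of_tendsto_of_tendsto_of_le_of_le tendsto_const_nhds hgeo
      (fun t => by linarith [hmnmx t]) hdle
  have hmxt : Tendsto mx atTop (nhds α) := by
    have h1 : Tendsto (fun t => α + (mx t - mn t)) atTop (nhds α) := by
      have := tendsto_const_nhds (x := α) (f := atTop (α := ℕ)) |>.add hdtend
      rwa [add_zero] at this
    exact tendsto_of_tendsto_of_tendsto_of_le_of_le tendsto_const_nhds h1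
      (fun t => (hαmem t).2) (fun t => by linarith [(hαmem t).1])
  have hmnt : Tendsto mn atTop (nhds α) := by
    have h1 : Tendsto (fun t => mx t - (mx t - mn t)) atTop (nhds α) := by
      have := hmxt.sub hdtend
      rwa [sub_zero] at this
    exact h1.congr fun t => by ring
  have hwlim : ∀ e, Tendsto (fun t => w t e) atTop (nhds α) :=
    fun e => tendsto_of_tendsto_of_tendsto_of_le_of_le hmnt hmxt
      (fun t => Finset.inf'_le _ (Finset.mem_univ e))
      (fun t => Finset.le_sup' _ (Finset.mem_univ e))
  -- x as an exponential
  have hLamrow : ∀ f, ∑ ℓ, Lam f ℓ * Real.log (u ℓ) = v f := by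
    intro f
    rw [hv]
    simp only
    calc ∑ ℓ, Lam f ℓ * Real.log (u ℓ)
        = ∑ ℓ, if lam f = ℓ then Real.log (u ℓ) else 0 := by
          refine Finset.sum_congr rfl fun ℓ _ => ?_
          rw [hLam]
          split <;> simp
      _ = Real.log (u (lam f)) := by rw [Finset.sum_ite_eq]; simp
  have hxexp : ∀ t e, x t e = Real.exp (∑ i ∈ Finset.range t, (K ^ i).mulVec v e) := by
    intro t e
    rw [hx]
    have h1 : ∀ ℓ : L, u ℓ ^ (((∑ i ∈ Finset.range t, K ^ i) * Lam) e ℓ)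
        = Real.exp ((((∑ i ∈ Finset.range t, K ^ i) * Lam) e ℓ) * Real.log (u ℓ)) := by
      intro ℓ
      rw [Real.rpow_def_of_pos (hu ℓ), mul_comm]
    rw [Finset.prod_congr rfl fun ℓ _ => h1 ℓ, ← Real.exp_sum]
    congr 1
    calc ∑ ℓ, (((∑ i ∈ Finset.range t, K ^ i) * Lam) e ℓ) * Real.log (u ℓ)
        = ∑ ℓ, ∑ f, (∑ i ∈ Finset.range t, K ^ i) e f * (Lam f ℓ * Real.log (u ℓ)) := by
          refine Finset.sum_congr rfl fun ℓ _ => ?_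
          rw [Matrix.mul_apply, Finset.sum_mul]
          exact Finset.sum_congr rfl fun f _ => by ring
      _ = ∑ f, ∑ ℓ, (∑ i ∈ Finset.range t, K ^ i) e f * (Lam f ℓ * Real.log (u ℓ)) :=
          Finset.sum_comm
      _ = ∑ f, (∑ i ∈ Finset.range t, K ^ i) e f * v f := by
          refine Finset.sum_congr rfl fun f _ => ?_
          rw [← Finset.mul_sum, hLamrow f]
      _ = ∑ f, ∑ i ∈ Finset.range t, (K ^ i) e f * v f := by
          refine Finset.sum_congr rfl fun f _ => ?_
          rw [Matrix.sum_apply, Finset.sum_mul]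
      _ = ∑ i ∈ Finset.range t, ∑ f, (K ^ i) e f * v f := Finset.sum_comm
      _ = ∑ i ∈ Finset.range t, (K ^ i).mulVec v e := by
          refine Finset.sum_congr rfl fun i _ => ?_
          simp [Matrix.mulVec, dotProduct]
  -- the scalar sums
  have hSsum : ∀ t e, ∑ i ∈ Finset.range t, (K ^ i).mulVec v e
      = ∑ i ∈ Finset.range t, ρ ^ i * (z e * w i e) := by
    intro t e
    refine Finset.sum_congr rfl fun i _ => ?_
    rw [hwdef]
    simp only
    have := (hz e).ne'
    field_simp
  -- main limit of exponents
  have hmain : ∀ e, Tendsto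
      (fun t : ℕ => ((ρ - 1) / (ρ ^ t - 1)) * ∑ i ∈ Finset.range t, (K ^ i).mulVec v e)
      atTop (nhds (z e * α)) := by
    intro e
    have h1 : Tendsto (fun i : ℕ => z e * w i e) atTop (nhds (z e * α)) :=
      (hwlim e).const_mul (z e)
    have h2 := spa_cesaro_geom hρ h1
    exact h2.congr fun t => by rw [hSsum t e]
  -- the target constant
  have htv : (∏ ℓ, u ℓ ^ (∑ e', y e' * Lam e' ℓ)) = Real.exp α := by
    have h1 : ∀ ℓ : L, u ℓ ^ (∑ e', y e' * Lam e' ℓ)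
        = Real.exp ((∑ e', y e' * Lam e' ℓ) * Real.log (u ℓ)) := fun ℓ => by
      rw [Real.rpow_def_of_pos (hu ℓ), mul_comm]
    rw [Finset.prod_congr rfl fun ℓ _ => h1 ℓ, ← Real.exp_sum]
    congr 1
    calc ∑ ℓ, (∑ e', y e' * Lam e' ℓ) * Real.log (u ℓ)
        = ∑ ℓ, ∑ e', y e' * (Lam e' ℓ * Real.log (u ℓ)) := by
          refine Finset.sum_congr rfl fun ℓ _ => ?_
          rw [Finset.sum_mul]
          exact Finset.sum_congr rfl fun e' _ => by ring
      _ = ∑ e', ∑ ℓ, y e' * (Lam e' ℓ * Real.log (u ℓ)) := Finset.sum_comm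
      _ = ∑ e', y e' * v e' := by
          refine Finset.sum_congr rfl fun e' _ => ?_
          rw [← Finset.mul_sum, hLamrow e']
      _ = α := hα.symm
  -- divergence factor
  have hfac : Tendsto (fun t : ℕ => (ρ ^ t - 1) / (ρ - 1)) atTop atTop := by
    have h1 : Tendsto (fun t : ℕ => ρ ^ t) atTop atTop :=
      tendsto_pow_atTop_atTop_of_one_lt hρ
    exact (h1.atTop_add tendsto_const_nhds).atTop_div_const (by linarith)
  have hSrw : ∀ e, ∀ᶠ t : ℕ in atTop,
      ((ρ ^ t - 1) / (ρ - 1)) *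
        (((ρ - 1) / (ρ ^ t - 1)) * ∑ i ∈ Finset.range t, (K ^ i).mulVec v e)
        = ∑ i ∈ Finset.range t, (K ^ i).mulVec v e := by
    intro e
    filter_upwards [eventually_ge_atTop 1] with t ht
    have h1 : (1:ℝ) < ρ ^ t := one_lt_pow₀ hρ (by omega)
    have h2 : ρ ^ t - 1 ≠ 0 := ne_of_gt (by linarith)
    have h3 : ρ - 1 ≠ 0 := ne_of_gt (by linarith)
    field_simp
  refine ⟨?_, ?_, ?_⟩
  · -- part 1
    intro e
    have h1 : ∀ t : ℕ, x t e ^ ((ρ - 1) / (ρ ^ t - 1))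
        = Real.exp (((ρ - 1) / (ρ ^ t - 1)) * ∑ i ∈ Finset.range t, (K ^ i).mulVec v e) := by
      intro t
      rw [hxexp t e, Real.rpow_def_of_pos (Real.exp_pos _), Real.log_exp, mul_comm]
    have h2 : (∏ ℓ, u ℓ ^ (∑ e', y e' * Lam e' ℓ)) ^ (z e) = Real.exp (z e * α) := by
      rw [htv, Real.rpow_def_of_pos (Real.exp_pos _), Real.log_exp, mul_comm]
    rw [h2]
    have h3 := (Real.continuous_exp.tendsto (z e * α)).comp (hmain e)
    exact h3.congr fun t => (h1 t).symm
  · -- part 2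
    intro hP e
    have hα0 : α < 0 := by
      rw [htv] at hP
      exact Real.exp_lt_one_iff.mp hP
    have hzα : z e * α < 0 := mul_neg_of_pos_of_neg (hz e) hα0
    have hprod := Filter.Tendsto.atTop_mul_neg hzα hfac (hmain e)
    have hS : Tendsto (fun t : ℕ => ∑ i ∈ Finset.range t, (K ^ i).mulVec v e)
        atTop atBot := hprod.congr' (hSrw e)
    have h4 := Real.tendsto_exp_atBot.comp hS
    exact h4.congr fun t => (hxexp t e).symm
  · -- part 3
    intro hP e
    have hα0 : 0 < α := by
      rw [htv] at hP
      exact Real.one_lt_exp_iff.mp hP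
    have hzα : 0 < z e * α := mul_pos (hz e) hα0
    have hprod := Filter.Tendsto.pos_mul_atTop hzα (hmain e) hfac
    have hprod' : Tendsto (fun t : ℕ => ((ρ ^ t - 1) / (ρ - 1)) *
        (((ρ - 1) / (ρ ^ t - 1)) * ∑ i ∈ Finset.range t, (K ^ i).mulVec v e))
        atTop atTop := hprod.congr fun t => by ring
    have hS : Tendsto (fun t : ℕ => ∑ i ∈ Finset.range t, (K ^ i).mulVec v e)
        atTop atTop := hprod'.congr' (hSrw e)
    have h4 := Real.tendsto_exp_atTop.comp hS
    exact h4.congr fun t => (hxexp t e).symm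
end

section
/- Let G be a d-regular undirected graph with n vertices (d ≥ 3) whose flow matrix K is primitive. Then the Perron eigenvalue of K is ρ = d − 1, the Perron vectors are constant, and the convergence criterion vector c = y*Λ is a positive multiple of the all-ones vector; hence the sum-product algorithm on the associated bipartite graph converges to 0 if ∏_ℓ u_ℓ < 1 and to ∞ if ∏_ℓ u_ℓ > 1. -/
open Filter

section Aux

lemma spa_pairwise_bound {E : Type*} [Fintype E] [Nonempty E]
    (A : Matrix E E ℝ) (δ R M : ℝ)
    (hδ : ∀ e f, δ ≤ A e f) (hrow : ∀ e, ∑ f, A e f = R)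
    (w : E → ℝ) (hw : ∀ f f', w f - w f' ≤ M) :
    ∀ e e', (A.mulVec w) e - (A.mulVec w) e' ≤ (R - δ * Fintype.card E) * M := by
  intro e e'
  obtain ⟨f0, -, hf0⟩ := Finset.exists_min_image Finset.univ w
    ⟨Classical.arbitrary E, Finset.mem_univ _⟩
  have key : (A.mulVec w) e - (A.mulVec w) e'
      = ∑ f, (A e f - A e' f) * (w f - w f0) := by
    have : ∀ f, (A e f - A e' f) * (w f - w f0)
        = A e f * w f - A e' f * w f - (A e f * w f0 - A e' f * w f0) := by
      intro f; ring
    simp only [this, Finset.sum_sub_distrib, ← Finset.sum_mul, hrow,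
      Matrix.mulVec, dotProduct]
    ring
  rw [key]
  have step : ∀ f, (A e f - A e' f) * (w f - w f0) ≤ (A e f - δ) * M := by
    intro f
    have h1 := hδ e f
    have h2 := hδ e' f
    have h3 : 0 ≤ w f - w f0 := by linarith [hf0 f (Finset.mem_univ f)]
    have h4 : w f - w f0 ≤ M := hw f f0
    rcases le_or_gt (A e' f) (A e f) with h | h
    · nlinarith
    · nlinarith
  calc ∑ f, (A e f - A e' f) * (w f - w f0) ≤ ∑ f, (A e f - δ) * M :=
        Finset.sum_le_sum fun f _ => step f
    _ = (R - δ * Fintype.card E) * M := by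
        rw [Finset.sum_congr rfl
            (fun f _ => by ring :
              ∀ f ∈ Finset.univ, (A e f - δ) * M = A e f * M - δ * M),
          Finset.sum_sub_distrib, ← Finset.sum_mul, hrow, Finset.sum_const,
          Finset.card_univ, nsmul_eq_mul]
        ring

lemma spa_diverge {E : Type*} [Fintype E] [DecidableEq E] [Nonempty E]
    (K : Matrix E E ℝ)
    (R : ℝ) (hR : 1 ≤ R)
    (hKnn : ∀ e f, 0 ≤ K e f)
    (hrow : ∀ e, ∑ f, K e f = R)
    (hcol : ∀ f, ∑ e, K e f = R)
    (r : ℕ) (hr : 0 < r) (δ : ℝ) (hδpos : 0 < δ) (hδ : ∀ e f : E, δ ≤ (K ^ r) e f)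
    (w : E → ℝ) (hs : 0 < ∑ e, w e) :
    ∀ e, Tendsto (fun t => ∑ i ∈ Finset.range t, ((K ^ i).mulVec w) e) atTop atTop := by
  classical
  set m : ℕ := Fintype.card E with hm
  have hmpos : 0 < m := Fintype.card_pos
  set s : ℝ := ∑ e, w e with hsdef
  have hrowpow : ∀ i : ℕ, ∀ e, ∑ f, (K ^ i) e f = R ^ i := by
    intro i
    induction i with
    | zero => intro e; simp [Matrix.one_apply]
    | succ i ih =>
        intro e
        rw [pow_succ]
        have : ∀ f, (K ^ i * K) e f = ∑ g, (K ^ i) e g * K g f := fun f => rfl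
        simp only [this]
        rw [Finset.sum_comm]
        simp only [← Finset.mul_sum, hrow]
        rw [← Finset.sum_mul, ih e, pow_succ]
  have hcolpow : ∀ i : ℕ, ∀ f, ∑ e, (K ^ i) e f = R ^ i := by
    intro i
    induction i with
    | zero => intro f; simp [Matrix.one_apply]
    | succ i ih =>
        intro f
        rw [pow_succ]
        have : ∀ e, (K ^ i * K) e f = ∑ g, (K ^ i) e g * K g f := fun e => rfl
        simp only [this]
        rw [Finset.sum_comm]
        have : ∀ g, ∑ e, (K ^ i) e g * K g f = R ^ i * K g f := by
          intro g; rw [← Finset.sum_mul, ih g]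
        simp only [this]
        rw [← Finset.mul_sum, hcol, pow_succ]
  have hpownn : ∀ i : ℕ, ∀ e f, 0 ≤ (K ^ i) e f := by
    intro i
    induction i with
    | zero => intro e f; rw [pow_zero, Matrix.one_apply]; split <;> norm_num
    | succ i ih =>
        intro e f
        rw [pow_succ]
        exact Finset.sum_nonneg fun g _ => mul_nonneg (ih e g) (hKnn g f)
  have htot : ∀ i : ℕ, ∑ e, ((K ^ i).mulVec w) e = R ^ i * s := by
    intro i
    simp only [Matrix.mulVec, dotProduct]
    rw [Finset.sum_comm]
    have : ∀ f, ∑ e, (K ^ i) e f * w f = R ^ i * w f := by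
      intro f; rw [← Finset.sum_mul, hcolpow i f]
    simp only [this, ← Finset.mul_sum, hsdef]
  set M0 : ℝ := (Finset.univ.sup' Finset.univ_nonempty w) -
      (Finset.univ.inf' Finset.univ_nonempty w) with hM0
  have hwM0 : ∀ f f', w f - w f' ≤ M0 := by
    intro f f'
    have h1 : w f ≤ Finset.univ.sup' Finset.univ_nonempty w :=
      Finset.le_sup' w (Finset.mem_univ f)
    have h2 : Finset.univ.inf' Finset.univ_nonempty w ≤ w f' :=
      Finset.inf'_le w (Finset.mem_univ f')
    simp only [hM0]; linarith
  have hM0nn : 0 ≤ M0 :=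
    le_trans (by simp) (hwM0 (Classical.arbitrary E) (Classical.arbitrary E))
  set P : ℝ := R ^ r - δ * m with hP
  have hPnn : 0 ≤ P := by
    have := Finset.sum_nonneg (s := (Finset.univ : Finset E))
      (f := fun f => (K ^ r) (Classical.arbitrary E) f - δ)
      (fun f _ => sub_nonneg.mpr (hδ (Classical.arbitrary E) f))
    rw [Finset.sum_sub_distrib, hrowpow r, Finset.sum_const, Finset.card_univ,
      nsmul_eq_mul] at this
    simp only [hP]; linarith
  have hRpos : (0:ℝ) < R := lt_of_lt_of_le one_pos hR
  have hRrpos : (0:ℝ) < R ^ r := pow_pos hRpos r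
  have hPlt : P < R ^ r := by
    have : 0 < δ * m := mul_pos hδpos (by exact_mod_cast hmpos)
    simp only [hP]; linarith
  have hosc_block : ∀ k : ℕ, ∀ e e',
      ((K ^ (r * k)).mulVec w) e - ((K ^ (r * k)).mulVec w) e' ≤ P ^ k * M0 := by
    intro k
    induction k with
    | zero => intro e e'; simpa using hwM0 e e'
    | succ k ih =>
        intro e e'
        have hrw : K ^ (r * (k + 1)) = K ^ r * K ^ (r * k) := by
          rw [← pow_add]; ring_nf
        rw [hrw, ← Matrix.mulVec_mulVec]
        have := spa_pairwise_bound (K ^ r) δ (R ^ r) (P ^ k * M0)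
          hδ (hrowpow r) ((K ^ (r * k)).mulVec w) ih e e'
        calc _ ≤ (R ^ r - δ * (Fintype.card E : ℝ)) * (P ^ k * M0) := this
          _ = P ^ (k + 1) * M0 := by rw [pow_succ]; simp only [hP, hm]; ring
  have hosc : ∀ i : ℕ, ∀ e e',
      ((K ^ i).mulVec w) e - ((K ^ i).mulVec w) e'
        ≤ R ^ (i % r) * (P ^ (i / r) * M0) := by
    intro i e e'
    have hi : K ^ i = K ^ (i % r) * K ^ (r * (i / r)) := by
      rw [← pow_add, Nat.mod_add_div]
    rw [hi, ← Matrix.mulVec_mulVec]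
    have := spa_pairwise_bound (K ^ (i % r)) 0 (R ^ (i % r)) (P ^ (i / r) * M0)
      (fun e f => hpownn _ e f) (hrowpow _)
      ((K ^ (r * (i / r))).mulVec w) (hosc_block (i / r)) e e'
    simpa using this
  have hmin : ∀ i : ℕ, ∀ e,
      R ^ i * (s / m) - R ^ (i % r) * (P ^ (i / r) * M0) ≤ ((K ^ i).mulVec w) e := by
    intro i e
    have havg : ∑ e', (fun _ : E => R ^ i * (s / m)) e' ≤ ∑ e', ((K ^ i).mulVec w) e' := by
      rw [htot i, Finset.sum_const, Finset.card_univ, nsmul_eq_mul]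
      have : (m : ℝ) ≠ 0 := Nat.cast_ne_zero.mpr hmpos.ne'
      field_simp
      simp [hm]
    obtain ⟨e', -, he'⟩ := Finset.exists_le_of_sum_le Finset.univ_nonempty havg
    have := hosc i e' e
    linarith
  set q : ℝ := P / R ^ r with hq
  have hq0 : 0 ≤ q := div_nonneg hPnn hRrpos.le
  have hq1 : q < 1 := (div_lt_one hRrpos).mpr hPlt
  have hmR : (0:ℝ) < m := by exact_mod_cast hmpos
  have hc : 0 < s / (2 * m) := by positivity
  have htend : Tendsto (fun k : ℕ => q ^ k * M0) atTop (nhds 0) := by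
    simpa using (tendsto_pow_atTop_nhds_zero_of_lt_one hq0 hq1).mul_const M0
  obtain ⟨k0, hk0⟩ := Filter.eventually_atTop.mp
    (htend.eventually_lt_const hc)
  have hterm : ∀ i, r * k0 ≤ i → ∀ e, s / (2 * m) ≤ ((K ^ i).mulVec w) e := by
    intro i hi e
    have hk : k0 ≤ i / r := (Nat.le_div_iff_mul_le hr).mpr (by rw [Nat.mul_comm]; exact hi)
    have h1 := hmin i e
    have hqk : q ^ (i / r) * M0 < s / (2 * m) := hk0 (i / r) hk
    have hRi1 : (1:ℝ) ≤ R ^ i := one_le_pow₀ hR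
    have hPid : P ^ (i / r) = q ^ (i / r) * (R ^ r) ^ (i / r) := by
      rw [← mul_pow]
      congr 1
      field_simp [hq]
      rw [hq, div_mul_cancel₀ _ hRrpos.ne']
    have hRsplit : R ^ (i % r) * (R ^ r) ^ (i / r) = R ^ i := by
      rw [← pow_mul, ← pow_add, Nat.mod_add_div]
    have h2 : R ^ (i % r) * (P ^ (i / r) * M0) = R ^ i * (q ^ (i / r) * M0) := by
      rw [hPid, ← hRsplit]; ring
    have h3 : R ^ i * (q ^ (i / r) * M0) ≤ R ^ i * (s / (2 * m)) :=
      mul_le_mul_of_nonneg_left hqk.le (pow_nonneg hRpos.le i)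
    have h4 : R ^ i * (s / m) = 2 * (R ^ i * (s / (2 * m))) := by
      field_simp
    nlinarith [mul_le_mul_of_nonneg_right hRi1 hc.le]
  intro e
  set i0 : ℕ := r * k0 with hi0
  set c : ℝ := s / (2 * m) with hcc
  set C : ℝ := ∑ i ∈ Finset.range i0, ((K ^ i).mulVec w) e with hC
  have hg : Tendsto (fun t : ℕ => C + ((t : ℝ) - i0) * c) atTop atTop := by
    apply tendsto_atTop_add_const_left
    apply Tendsto.atTop_mul_const hc
    simp only [sub_eq_add_neg]
    exact tendsto_atTop_add_const_right _ _ tendsto_natCast_atTop_atTop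
  apply tendsto_atTop_mono' atTop ?_ hg
  filter_upwards [Filter.eventually_ge_atTop i0] with t ht
  have hsplit : ∑ i ∈ Finset.range t, ((K ^ i).mulVec w) e
      = C + ∑ i ∈ Finset.Ico i0 t, ((K ^ i).mulVec w) e := by
    rw [hC, Finset.range_eq_Ico, Finset.range_eq_Ico,
      Finset.sum_Ico_consecutive _ (Nat.zero_le i0) ht]
  have hlow : ((t : ℝ) - i0) * c ≤ ∑ i ∈ Finset.Ico i0 t, ((K ^ i).mulVec w) e := by
    have h5 : (Finset.Ico i0 t).card • c ≤ ∑ i ∈ Finset.Ico i0 t, ((K ^ i).mulVec w) e :=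
      Finset.card_nsmul_le_sum _ _ _ fun i hi =>
        hterm i (Finset.mem_Ico.mp hi).1 e
    rw [Nat.card_Ico, nsmul_eq_mul, Nat.cast_sub ht] at h5
    exact h5
  rw [hsplit]
  linarith

end Aux

/-- Let `G` be a `d`-regular undirected graph (`d ≥ 3`) with `n`
vertices whose flow matrix `K` is primitive.  Then the Perron eigenvalue of `K`
is `ρ = d − 1` with constant Perron vectors (the all-ones vector is both a right
and a left eigenvector for `d − 1`), the convergence criterion vector
`c = y* Λ` (with `y*` the constant left Perron vector `1/(nd)`) is a positive
multiple of the all-ones vector, and hence the sum-product algorithm on the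
associated bipartite graph (messages `x⁽ᵗ⁾ = u^{(Σ_{i<t} K^i) Λ}`) converges to
`0` if `∏_ℓ u_ℓ < 1` and to `∞` if `∏_ℓ u_ℓ > 1`. -/
theorem spa_regular_graph_convergence
    {E V : Type*} [Fintype E] [DecidableEq E] [Fintype V] [DecidableEq V]
    [Nonempty V]
    (σ τ : E → V) (bar : E → E)
    (hinv : ∀ e, bar (bar e) = e) (hne : ∀ e, bar e ≠ e)
    (hbar : ∀ e, τ (bar e) = σ e)
    (d n : ℕ) (hd : 3 ≤ d) (hn : Fintype.card V = n)
    (hreg : ∀ v : V, (Finset.univ.filter fun e => τ e = v).card = d)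
    (Lam : Matrix E V ℝ) (hLam : ∀ e v, Lam e v = if σ e = v then 1 else 0)
    (K : Matrix E E ℝ)
    (hK : ∀ e f, K e f = if τ f = σ e ∧ f ≠ bar e then 1 else 0)
    (hprim : ∃ r : ℕ, 0 < r ∧ ∀ e f, 0 < (K ^ r) e f)
    (u : V → ℝ) (hu : ∀ v, 0 < u v)
    (x : ℕ → E → ℝ)
    (hx : ∀ t e, x t e =
      ∏ v, u v ^ (((∑ i ∈ Finset.range t, K ^ i) * Lam) e v)) :
    (K.mulVec (fun _ => 1) = ((d : ℝ) - 1) • (fun _ => (1 : ℝ))) ∧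
    (Matrix.vecMul (fun _ => (1 : ℝ)) K = ((d : ℝ) - 1) • (fun _ => (1 : ℝ))) ∧
    (∃ α : ℝ, 0 < α ∧ ∀ v : V,
      Matrix.vecMul (fun _ => (1 : ℝ) / (n * d)) Lam v = α) ∧
    ((∏ v, u v) < 1 → ∀ e, Tendsto (fun t => x t e) atTop (nhds 0)) ∧
    (1 < (∏ v, u v) → ∀ e, Tendsto (fun t => x t e) atTop atTop) := by
  classical
  -- E is nonempty
  have hE : Nonempty E := by
    have := hreg (Classical.arbitrary V)
    have hpos : 0 < (Finset.univ.filter fun e => τ e = Classical.arbitrary V).card := by omega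
    obtain ⟨e, -⟩ := Finset.card_pos.mp hpos
    exact ⟨e⟩
  -- σ-fibers have cardinality d
  have hσcard : ∀ v : V, (Finset.univ.filter fun e => σ e = v).card = d := by
    intro v
    rw [← hreg v]
    apply Finset.card_bij' (fun e _ => bar e) (fun e _ => bar e)
    · intro e he
      simp only [Finset.mem_filter, Finset.mem_univ, true_and] at he ⊢
      rw [hbar, he]
    · intro e he
      simp only [Finset.mem_filter, Finset.mem_univ, true_and] at he ⊢
      rw [← hbar, hinv, he]
    · intro e _; exact hinv e
    · intro e _; exact hinv e
  -- row sums of K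
  have hrowK : ∀ e, ∑ f, K e f = (d : ℝ) - 1 := by
    intro e
    have h0 : ∑ f, K e f =
        ((Finset.univ.filter fun f => τ f = σ e ∧ f ≠ bar e).card : ℝ) := by
      simp only [hK]
      rw [Finset.sum_boole]
    rw [h0]
    have hfe : (Finset.univ.filter fun f => τ f = σ e ∧ f ≠ bar e)
        = (Finset.univ.filter fun f => τ f = σ e).erase (bar e) := by
      ext f
      simp only [Finset.mem_filter, Finset.mem_erase, Finset.mem_univ, true_and]
      tauto
    rw [hfe, Finset.card_erase_of_mem (by
      simp only [Finset.mem_filter, Finset.mem_univ, true_and]; exact hbar e),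
      hreg (σ e)]
    have : (1:ℕ) ≤ d := by omega
    push_cast [this]
    ring
  -- column sums of K
  have hcolK : ∀ f, ∑ e, K e f = (d : ℝ) - 1 := by
    intro f
    have h0 : ∑ e, K e f =
        ((Finset.univ.filter fun e => τ f = σ e ∧ f ≠ bar e).card : ℝ) := by
      simp only [hK]
      rw [Finset.sum_boole]
    rw [h0]
    have hfe : (Finset.univ.filter fun e => τ f = σ e ∧ f ≠ bar e)
        = (Finset.univ.filter fun e => σ e = τ f).erase (bar f) := by
      ext e
      simp only [Finset.mem_filter, Finset.mem_erase, Finset.mem_univ, true_and]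
      constructor
      · rintro ⟨h1, h2⟩
        refine ⟨fun h => h2 ?_, h1.symm⟩
        rw [h, hinv]
      · rintro ⟨h1, h2⟩
        refine ⟨h2.symm, fun h => h1 ?_⟩
        rw [h, hinv]
    rw [hfe, Finset.card_erase_of_mem (by
      simp only [Finset.mem_filter, Finset.mem_univ, true_and]
      rw [← hbar (bar f), hinv]), hσcard (τ f)]
    have : (1:ℕ) ≤ d := by omega
    push_cast [this]
    ring
  have hdR : (3:ℝ) ≤ (d:ℝ) := by exact_mod_cast hd
  have hnpos : 0 < n := by
    rw [← hn]; exact Fintype.card_pos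
  -- the log-vector on edges
  set w : E → ℝ := fun e => Real.log (u (σ e)) with hw
  -- closed form for x
  have hLamVec : ∀ L : V → ℝ, Lam.mulVec L = fun e => L (σ e) := by
    intro L
    funext e
    simp only [Matrix.mulVec, dotProduct, hLam, ite_mul, one_mul, zero_mul]
    rw [Finset.sum_ite_eq Finset.univ (σ e) L]
    simp
  have hxexp : ∀ t e, x t e =
      Real.exp (∑ i ∈ Finset.range t, ((K ^ i).mulVec w) e) := by
    intro t e
    rw [hx t e]
    have h1 : ∀ v, u v ^ (((∑ i ∈ Finset.range t, K ^ i) * Lam) e v)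
        = Real.exp ((((∑ i ∈ Finset.range t, K ^ i) * Lam) e v) * Real.log (u v)) := by
      intro v
      rw [Real.rpow_def_of_pos (hu v)]
      ring_nf
    simp only [h1]
    rw [← Real.exp_sum]
    congr 1
    have h2 : ∑ v, (((∑ i ∈ Finset.range t, K ^ i) * Lam) e v) * Real.log (u v)
        = (((∑ i ∈ Finset.range t, K ^ i) * Lam).mulVec fun v => Real.log (u v)) e := rfl
    rw [h2, ← Matrix.mulVec_mulVec, hLamVec]
    simp only [Matrix.mulVec, dotProduct, Matrix.sum_apply, Finset.sum_mul]
    exact Finset.sum_comm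
  -- sum of w
  have hsum_w : ∑ e, w e = (d : ℝ) * Real.log (∏ v, u v) := by
    rw [Real.log_prod (fun v _ => (hu v).ne')]
    have h1 : ∀ e : E, w e = ∑ v, if σ e = v then Real.log (u v) else 0 := by
      intro e
      rw [Finset.sum_ite_eq Finset.univ (σ e) (fun v => Real.log (u v))]
      simp [hw]
    simp only [h1]
    rw [Finset.sum_comm]
    have h2 : ∀ v : V, ∑ e, (if σ e = v then Real.log (u v) else 0)
        = (d : ℝ) * Real.log (u v) := by
      intro v
      rw [← Finset.sum_filter, Finset.sum_const, hσcard v, nsmul_eq_mul]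
    simp only [h2]
    rw [Finset.mul_sum]
  have hprod_pos : 0 < ∏ v, u v := Finset.prod_pos fun v _ => hu v
  -- primitivity data
  obtain ⟨r, hr, hKr⟩ := hprim
  have hEE : Nonempty (E × E) := inferInstance
  set δ : ℝ := (Finset.univ : Finset (E × E)).inf' Finset.univ_nonempty
      (fun p => (K ^ r) p.1 p.2) with hδdef
  have hδpos : 0 < δ := by
    rw [hδdef, Finset.lt_inf'_iff]
    exact fun p _ => hKr p.1 p.2
  have hδle : ∀ e f : E, δ ≤ (K ^ r) e f := by
    intro e f
    exact Finset.inf'_le _ (Finset.mem_univ (e, f))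
  have hKnn : ∀ e f, 0 ≤ K e f := by
    intro e f
    rw [hK]
    split <;> norm_num
  have hR1 : (1:ℝ) ≤ (d:ℝ) - 1 := by linarith
  refine ⟨?_, ?_, ?_, ?_, ?_⟩
  · -- right eigenvector
    funext e
    simp only [Matrix.mulVec, dotProduct, mul_one, Pi.smul_apply, smul_eq_mul]
    rw [hrowK e]
  · -- left eigenvector
    funext f
    simp only [Matrix.vecMul, dotProduct, one_mul, Pi.smul_apply, smul_eq_mul]
    rw [hcolK f, mul_one]
  · -- convergence criterion vector
    refine ⟨1 / n, by positivity, fun v => ?_⟩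
    simp only [Matrix.vecMul, dotProduct, hLam, mul_ite, mul_one, mul_zero]
    rw [← Finset.sum_filter, Finset.sum_const, hσcard v, nsmul_eq_mul]
    have hd0 : (d:ℝ) ≠ 0 := by positivity
    have hn0 : (n:ℝ) ≠ 0 := by positivity
    field_simp
  · -- product < 1
    intro hlt e
    have hlog : Real.log (∏ v, u v) < 0 := Real.log_neg hprod_pos hlt
    have hspos : 0 < ∑ e', (-w) e' := by
      simp only [Pi.neg_apply]
      rw [Finset.sum_neg_distrib, hsum_w]
      nlinarith
    have hdiv := spa_diverge K ((d:ℝ) - 1) hR1 hKnn hrowK hcolK r hr δ hδpos hδle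
      (-w) hspos e
    have hneg : ∀ t, ∑ i ∈ Finset.range t, ((K ^ i).mulVec (-w)) e
        = -∑ i ∈ Finset.range t, ((K ^ i).mulVec w) e := by
      intro t
      rw [← Finset.sum_neg_distrib]
      exact Finset.sum_congr rfl fun i _ => by rw [Matrix.mulVec_neg]; rfl
    have hbot : Tendsto (fun t => ∑ i ∈ Finset.range t, ((K ^ i).mulVec w) e)
        atTop atBot := by
      rw [← tendsto_neg_atTop_iff]
      exact hdiv.congr fun t => (hneg t)
    refine Tendsto.congr (fun t => (hxexp t e).symm) ?_
    exact Real.tendsto_exp_atBot.comp hbot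
  · -- product > 1
    intro hgt e
    have hlog : 0 < Real.log (∏ v, u v) := Real.log_pos hgt
    have hspos : 0 < ∑ e', w e' := by
      rw [hsum_w]
      nlinarith
    have hdiv := spa_diverge K ((d:ℝ) - 1) hR1 hKnn hrowK hcolK r hr δ hδpos hδle
      w hspos e
    refine Tendsto.congr (fun t => (hxexp t e).symm) ?_
    exact Real.tendsto_exp_atTop.comp hdiv
end

section
/- Let G be an undirected graph with edge conjugation, Λ its |E| × |V| edge-source incidence matrix, K the adjacency matrix of its flow graph, and T the |E| × |E| permutation matrix of the conjugation (T_{e,\bar{e}} = 1, zero elsewhere). Then K = Λ Λᵀ T − T. -/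
/-- Let `G` be an undirected graph with fixed-point-free edge
conjugation `bar` (with `τ(bar e) = σ e`), let `Λ` be its `|E| × |V|`
edge–source incidence matrix (`Λ e v = 1` iff `σ e = v`), let `K` be the
adjacency matrix of its flow graph (`K e f = 1` iff `τ f = σ e` and
`f ≠ bar e`, equivalently `σ (bar f) = σ e` and `bar f ≠ e`), and let `T` be the
permutation matrix of the conjugation (`T e f = 1` iff `f = bar e`).  Then
`K = Λ Λᵀ T − T`. -/
theorem flow_matrix_eq
    {E V : Type*} [Fintype E] [DecidableEq E] [Fintype V] [DecidableEq V]
    (σ τ : E → V) (bar : E → E)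
    (hinv : ∀ e, bar (bar e) = e) (hne : ∀ e, bar e ≠ e)
    (hbar : ∀ e, τ (bar e) = σ e)
    (Lam : Matrix E V ℝ) (hLam : ∀ e v, Lam e v = if σ e = v then 1 else 0)
    (K : Matrix E E ℝ)
    (hK : ∀ e f, K e f = if τ f = σ e ∧ f ≠ bar e then 1 else 0)
    (T : Matrix E E ℝ)
    (hT : ∀ e f, T e f = if f = bar e then 1 else 0) :
    K = Lam * Lam.transpose * T - T := by
  have hA : Lam * Lam.transpose = fun e f => if σ e = σ f then 1 else 0 := by
    ext e f
    simp only [Matrix.mul_apply, Matrix.transpose_apply, hLam]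
    rw [Finset.sum_eq_single (σ e)]
    · by_cases h : σ e = σ f
      · rw [if_pos h, if_pos rfl, if_pos h.symm]; ring
      · rw [if_neg h, if_neg (Ne.symm h)]; ring
    · intro v _ hv; simp [Ne.symm hv]
    · simp
  ext e g
  rw [hK]
  rw [Matrix.sub_apply, Matrix.mul_apply]; simp only [hA, hT]
  rw [Finset.sum_eq_single (bar g)]
  · rw [if_pos (hinv g).symm]
    have hτ : σ (bar g) = τ g := by
      have h := hbar (bar g); rw [hinv] at h; exact h.symm
    rw [hτ]
    by_cases h1 : τ g = σ e
    · rw [if_pos h1.symm]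
      by_cases h2 : g = bar e
      · rw [if_neg (fun h => h.2 h2), if_pos h2]; ring
      · rw [if_pos ⟨h1, h2⟩, if_neg h2]; ring
    · have h2 : g ≠ bar e := fun h => by rw [h, hbar] at h1; exact h1 rfl
      rw [if_neg (fun h => h1 h.1), if_neg (fun h : σ e = τ g => h1 h.symm), if_neg h2]
      ring
  · intro f _ hf
    have : g ≠ bar f := fun h => hf (by rw [h, hinv])
    simp [this]
  · simp
end
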